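/- arXiv:2012.02864 — 8 statements merged into one kernel-verified Lean document; each statement's English description precedes it below -/
import Mathlib

section
/- Let υ₀, σ_s, σ_f, L > 0 with θ := υ₀/(2Lσ_s) > 1, and let x_* > 0 satisfy sinh(x_*) = θ·x_*. Define λ_* := σ_f − σ_s − √(σ_s² + (υ₀x_*/(2L))²), φ(r) := sinh(½x_*(1 − r/L)) / sinh(½x_*), f₊(r) := φ(r) and f₋(r) := φ(−r). Then (f₊, f₋) solves the one-dimensional slab reactor eigenvalue problem with parameters υ₀, σ_s, σ_f, L and eigenvalue λ = λ_*: the ODE system holds for all r ∈ (−L, L), the boundary conditions f₊(L) = 0 and f₋(−L) = 0 hold, and f₊(r) > 0 and f₋(r) > 0 for all r ∈ (−L, L). -/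
/-- The ODE system of the one-dimensional slab reactor eigenvalue problem with
parameters `υ₀, σs, σf, L` and eigenvalue `lam`. -/
def SlabODE (υ₀ σs σf L lam : ℝ) (fp fm : ℝ → ℝ) : Prop :=
  ∀ r ∈ Set.Ioo (-L) L,
    HasDerivAt fp ((1 / υ₀) * ((lam - σf + σs) * fp r - σs * fm r)) r ∧
    HasDerivAt fm ((1 / υ₀) * (σs * fp r - (lam - σf + σs) * fm r)) r

/-- Solution of the slab reactor eigenvalue problem in the case `θ > 1`. -/
theorem slab_theta_gt_one (υ₀ σs σf L : ℝ)
    (hυ₀ : 0 < υ₀) (hσs : 0 < σs) (hσf : 0 < σf) (hL : 0 < L)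
    (hθ : 1 < υ₀ / (2 * L * σs))
    (xs : ℝ) (hxs : 0 < xs)
    (hfix : Real.sinh xs = (υ₀ / (2 * L * σs)) * xs)
    (lam : ℝ) (hlam : lam = σf - σs - Real.sqrt (σs ^ 2 + (υ₀ * xs / (2 * L)) ^ 2))
    (φ : ℝ → ℝ) (hφ : ∀ r, φ r = Real.sinh (xs / 2 * (1 - r / L)) / Real.sinh (xs / 2))
    (fp fm : ℝ → ℝ) (hfp : ∀ r, fp r = φ r) (hfm : ∀ r, fm r = φ (-r)) :
    SlabODE υ₀ σs σf L lam fp fm ∧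
    fp L = 0 ∧ fm (-L) = 0 ∧
    ∀ r ∈ Set.Ioo (-L) L, 0 < fp r ∧ 0 < fm r := by
  have hLne : L ≠ 0 := ne_of_gt hL
  have hσsne : σs ≠ 0 := ne_of_gt hσs
  have hυne : υ₀ ≠ 0 := ne_of_gt hυ₀
  have hs : 0 < Real.sinh (xs / 2) := Real.sinh_pos_iff.mpr (by linarith)
  have hsne : Real.sinh (xs / 2) ≠ 0 := ne_of_gt hs
  -- sqrt simplification
  have hμ : Real.sqrt (σs ^ 2 + (υ₀ * xs / (2 * L)) ^ 2) = σs * Real.cosh xs := by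
    have h1 : υ₀ * xs / (2 * L) = σs * Real.sinh xs := by
      rw [hfix]; field_simp
    have h2 : σs ^ 2 + (υ₀ * xs / (2 * L)) ^ 2 = (σs * Real.cosh xs) ^ 2 := by
      rw [h1]
      have := Real.cosh_sq xs
      nlinarith [Real.sinh_sq xs]
    rw [h2]
    exact Real.sqrt_sq (by positivity : (0:ℝ) ≤ σs * Real.cosh xs)
  -- derivative of φ
  have hφfun : φ = fun r => Real.sinh (xs / 2 * (1 - r / L)) / Real.sinh (xs / 2) :=
    funext hφ
  have hφd : ∀ r : ℝ, HasDerivAt φ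
      (Real.cosh (xs / 2 * (1 - r / L)) * (xs / 2 * (0 - 1 / L)) / Real.sinh (xs / 2)) r := by
    intro r
    rw [hφfun]
    have h1 : HasDerivAt (fun r : ℝ => 1 - r / L) (0 - 1 / L) r :=
      (hasDerivAt_const r (1:ℝ)).sub ((hasDerivAt_id r).div_const L)
    have h2 : HasDerivAt (fun r : ℝ => xs / 2 * (1 - r / L)) (xs / 2 * (0 - 1 / L)) r :=
      h1.const_mul (xs / 2)
    exact h2.sinh.div_const _
  have hfpfun : fp = φ := funext hfp
  have hfmfun : fm = fun r => φ (-r) := funext hfm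
  have hfmd : ∀ r : ℝ, HasDerivAt fm
      (Real.cosh (xs / 2 * (1 - (-r) / L)) * (xs / 2 * (0 - 1 / L)) / Real.sinh (xs / 2) * (-1)) r := by
    intro r
    rw [hfmfun]
    exact (hφd (-r)).comp r (hasDerivAt_neg r)
  refine ⟨?_, ?_, ?_, ?_⟩
  · intro r _
    constructor
    · have := hφd r
      rw [hfpfun]
      convert this using 1
      rw [hfm r, hφ r, hφ (-r), hlam, hμ]
      have hv : xs / 2 * (1 - (-r) / L) = xs - xs / 2 * (1 - r / L) := by ring
      rw [hv, Real.sinh_sub, hfix]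
      field_simp
      ring
    · have := hfmd r
      convert this using 1
      rw [hfp r, hfm r, hφ r, hφ (-r), hlam, hμ]
      have hv : xs / 2 * (1 - r / L) = xs - xs / 2 * (1 - (-r) / L) := by ring
      rw [hv, Real.sinh_sub, hfix]
      field_simp
      ring
  · rw [hfp L, hφ L]
    simp [hLne]
  · rw [hfm (-L), neg_neg, hφ L]
    simp [hLne]
  · intro r hr
    obtain ⟨hr1, hr2⟩ := hr
    have key : ∀ t : ℝ, -L < t → t < L → 0 < φ t := by
      intro t ht1 ht2
      rw [hφ t]
      apply div_pos _ hs
      apply Real.sinh_pos_iff.mpr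
      have : t / L < 1 := (div_lt_one hL).mpr ht2
      nlinarith
    rw [hfp r, hfm r]
    exact ⟨key r hr1 hr2, key (-r) (by linarith) (by linarith)⟩
end

section
/- Let υ₀, σ_s, σ_f, L > 0 with υ₀ = 2Lσ_s. Define λ_* := σ_f − 2σ_s, f₊(r) := 1 − r/L and f₋(r) := 1 + r/L. Then (f₊, f₋) solves the one-dimensional slab reactor eigenvalue problem with parameters υ₀, σ_s, σ_f, L and eigenvalue λ = λ_*: the ODE system holds for all r ∈ (−L, L), the boundary conditions f₊(L) = 0 and f₋(−L) = 0 hold, and f₊(r) > 0 and f₋(r) > 0 for all r ∈ (−L, L). -/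
/-- Solution of the slab reactor eigenvalue problem in the critical case `θ = 1`. -/
theorem slab_theta_eq_one (υ₀ σs σf L : ℝ)
    (hυ₀ : 0 < υ₀) (hσs : 0 < σs) (hσf : 0 < σf) (hL : 0 < L)
    (hθ : υ₀ = 2 * L * σs)
    (lam : ℝ) (hlam : lam = σf - 2 * σs)
    (fp fm : ℝ → ℝ) (hfp : ∀ r, fp r = 1 - r / L) (hfm : ∀ r, fm r = 1 + r / L) :
    SlabODE υ₀ σs σf L lam fp fm ∧
    fp L = 0 ∧ fm (-L) = 0 ∧
    ∀ r ∈ Set.Ioo (-L) L, 0 < fp r ∧ 0 < fm r := by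
  have hfp' : fp = fun r => 1 - r / L := funext hfp
  have hfm' : fm = fun r => 1 + r / L := funext hfm
  refine ⟨?_, ?_, ?_, ?_⟩
  · intro r hr
    constructor
    · have h : HasDerivAt (fun r : ℝ => 1 - r / L) (-(1 / L)) r := by
        simpa using (((hasDerivAt_id r).div_const L).const_sub 1)
      rw [hfp']
      convert h using 1
      simp only [hfp r, hfm r, hlam, hθ]
      field_simp
      try ring
      try tauto
    · have h : HasDerivAt (fun r : ℝ => 1 + r / L) (1 / L) r := by
        simpa using (((hasDerivAt_id r).div_const L).const_add 1)
      rw [hfm']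
      convert h using 1
      simp only [hfp r, hfm r, hlam, hθ]
      field_simp
      try ring
      try tauto
  · rw [hfp L]; field_simp; norm_num
  · rw [hfm (-L)]; field_simp; norm_num
  · intro r hr
    obtain ⟨h1, h2⟩ := hr
    constructor
    · rw [hfp r]
      have : r / L < 1 := (div_lt_one hL).2 h2
      linarith
    · rw [hfm r]
      have : -1 < r / L := by
        rw [lt_div_iff₀ hL] at *
        linarith
      linarith
end

section
/- Let υ₀, σ_s, σ_f, L > 0 with θ := υ₀/(2Lσ_s) < 1, and let x_* ∈ (0, π) satisfy sin(x_*) = θ·x_*. Set μ := υ₀x_*/(2L). Then μ ≤ σ_s, and defining λ_* := σ_f − σ_s − s·√(σ_s² − μ²) where s = 1 if cos(x_*) > 0, s = 0 if cos(x_*) = 0, and s = −1 if cos(x_*) < 0, φ(r) := sin(½x_*(1 − r/L)) / sin(½x_*), f₊(r) := φ(r) and f₋(r) := φ(−r), the pair (f₊, f₋) solves the one-dimensional slab reactor eigenvalue problem with parameters υ₀, σ_s, σ_f, L and eigenvalue λ = λ_*: the ODE system holds for all r ∈ (−L, L), the boundary conditions f₊(L) = 0 and f₋(−L) = 0 hold,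 and f₊(r) > 0 and f₋(r) > 0 for all r ∈ (−L, L). -/
private lemma trig1 (a u : ℝ) :
    Real.cos (2*a) * Real.sin (a - u) + Real.sin (a + u)
      = Real.sin (2*a) * Real.cos (a - u) := by
  rw [Real.sin_add, Real.sin_sub, Real.cos_sub, Real.sin_two_mul, Real.cos_two_mul]
  linear_combination (-2 * Real.cos a * Real.sin u) * Real.sin_sq_add_cos_sq a

private lemma trig2 (a u : ℝ) :
    Real.sin (a - u) + Real.cos (2*a) * Real.sin (a + u)
      = Real.sin (2*a) * Real.cos (a + u) := by
  have := trig1 a (-u)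
  simp only [sub_neg_eq_add, ← sub_eq_add_neg] at this
  linarith

/-- Solution of the slab reactor eigenvalue problem in the case `θ < 1`. -/
theorem slab_theta_lt_one (υ₀ σs σf L : ℝ)
    (hυ₀ : 0 < υ₀) (hσs : 0 < σs) (hσf : 0 < σf) (hL : 0 < L)
    (hθ : υ₀ / (2 * L * σs) < 1)
    (xs : ℝ) (hxs : xs ∈ Set.Ioo 0 Real.pi)
    (hfix : Real.sin xs = (υ₀ / (2 * L * σs)) * xs)
    (μ : ℝ) (hμ : μ = υ₀ * xs / (2 * L))
    (lam : ℝ)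
    (hlam : lam = σf - σs - Real.sign (Real.cos xs) * Real.sqrt (σs ^ 2 - μ ^ 2))
    (φ : ℝ → ℝ) (hφ : ∀ r, φ r = Real.sin (xs / 2 * (1 - r / L)) / Real.sin (xs / 2))
    (fp fm : ℝ → ℝ) (hfp : ∀ r, fp r = φ r) (hfm : ∀ r, fm r = φ (-r)) :
    μ ≤ σs ∧
    SlabODE υ₀ σs σf L lam fp fm ∧
    fp L = 0 ∧ fm (-L) = 0 ∧
    ∀ r ∈ Set.Ioo (-L) L, 0 < fp r ∧ 0 < fm r := by
  obtain ⟨hxs0, hxsπ⟩ := hxs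
  have hL0 : L ≠ 0 := hL.ne'
  have hυ0 : υ₀ ≠ 0 := hυ₀.ne'
  have hsinxs : 0 < Real.sin xs := Real.sin_pos_of_pos_of_lt_pi hxs0 hxsπ
  have hrel : σs * Real.sin xs = υ₀ * xs / (2 * L) := by
    rw [hfix]; field_simp
  have hμ' : μ = σs * Real.sin xs := by rw [hμ, hrel]
  have hμσ : μ ≤ σs := by
    rw [hμ']; nlinarith [Real.sin_le_one xs]
  have hsq : σs ^ 2 - μ ^ 2 = (σs * Real.cos xs) ^ 2 := by
    rw [hμ']; linear_combination (-σs ^ 2) * Real.sin_sq_add_cos_sq xs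
  have hsqrt : Real.sqrt (σs ^ 2 - μ ^ 2) = σs * |Real.cos xs| := by
    rw [hsq, Real.sqrt_sq_eq_abs, abs_mul, abs_of_pos hσs]
  have hsma : Real.sign (Real.cos xs) * |Real.cos xs| = Real.cos xs := by
    rcases lt_trichotomy (Real.cos xs) 0 with h | h | h
    · rw [Real.sign_of_neg h, abs_of_neg h]; ring
    · simp [h]
    · rw [Real.sign_of_pos h, abs_of_pos h]; ring
  have hkey : lam - σf + σs = -(σs * Real.cos xs) := by
    rw [hlam, hsqrt]
    linear_combination (-σs) * hsma
  have hφ' : φ = fun r => Real.sin (xs / 2 * (1 - r / L)) / Real.sin (xs / 2) :=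
    funext hφ
  subst hφ'
  have hfp' : fp = fun r => Real.sin (xs / 2 * (1 - r / L)) / Real.sin (xs / 2) :=
    funext hfp
  subst hfp'
  have hfm' : fm = fun r => Real.sin (xs / 2 * (1 - (-r) / L)) / Real.sin (xs / 2) :=
    funext hfm
  subst hfm'
  have hsa : 0 < Real.sin (xs / 2) :=
    Real.sin_pos_of_pos_of_lt_pi (by linarith) (by nlinarith [Real.pi_pos])
  refine ⟨hμσ, ?_, ?_, ?_, ?_⟩
  · intro r hr
    have h1 : HasDerivAt (fun r : ℝ => 1 - r / L) (-(1 / L)) r := by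
      simpa using ((hasDerivAt_id r).div_const L).const_sub 1
    have hdp : HasDerivAt (fun r => Real.sin (xs / 2 * (1 - r / L)) / Real.sin (xs / 2))
        (Real.cos (xs / 2 * (1 - r / L)) * (xs / 2 * -(1 / L)) / Real.sin (xs / 2)) r :=
      ((h1.const_mul (xs / 2)).sin).div_const _
    have h1m : HasDerivAt (fun r : ℝ => 1 - (-r) / L) (1 / L) r := by
      have := (((hasDerivAt_id r).neg.div_const L).const_sub 1)
      exact this.congr_deriv (by ring)
    have hdm : HasDerivAt (fun r => Real.sin (xs / 2 * (1 - (-r) / L)) / Real.sin (xs / 2))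
        (Real.cos (xs / 2 * (1 - (-r) / L)) * (xs / 2 * (1 / L)) / Real.sin (xs / 2)) r :=
      ((h1m.const_mul (xs / 2)).sin).div_const _
    have hA : xs / 2 * (1 - r / L) = xs / 2 - xs / 2 * (r / L) := by ring
    have hB : xs / 2 * (1 - (-r) / L) = xs / 2 + xs / 2 * (r / L) := by ring
    have hxx : 2 * (xs / 2) = xs := by ring
    constructor
    · convert hdp using 1
      simp only [hkey]
      rw [hA, hB]
      have ht := trig1 (xs / 2) (xs / 2 * (r / L))
      rw [hxx] at ht
      have hmu : υ₀⁻¹ * υ₀ = 1 := inv_mul_cancel₀ hυ0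
      linear_combination (-(σs / υ₀) / Real.sin (xs / 2)) * ht +
        (-(Real.cos (xs / 2 - xs / 2 * (r / L))) / (υ₀ * Real.sin (xs / 2))) * hrel +
        (-(Real.cos (xs / 2 - xs / 2 * (r / L)) * xs / (2 * L * Real.sin (xs / 2)))) * hmu
    · convert hdm using 1
      simp only [hkey]
      rw [hA, hB]
      have ht := trig2 (xs / 2) (xs / 2 * (r / L))
      rw [hxx] at ht
      have hmu : υ₀⁻¹ * υ₀ = 1 := inv_mul_cancel₀ hυ0
      linear_combination ((σs / υ₀) / Real.sin (xs / 2)) * ht +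
        (Real.cos (xs / 2 + xs / 2 * (r / L)) / (υ₀ * Real.sin (xs / 2))) * hrel +
        (Real.cos (xs / 2 + xs / 2 * (r / L)) * xs / (2 * L * Real.sin (xs / 2))) * hmu
  · show Real.sin (xs / 2 * (1 - L / L)) / Real.sin (xs / 2) = 0
    rw [div_self hL0]
    norm_num
  · show Real.sin (xs / 2 * (1 - -(-L) / L)) / Real.sin (xs / 2) = 0
    rw [neg_neg, div_self hL0]
    norm_num
  · intro r hr
    obtain ⟨hr1, hr2⟩ := hr
    have hrL : r / L * L = r := div_mul_cancel₀ r hL0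
    have hrL' : -r / L * L = -r := div_mul_cancel₀ (-r) hL0
    have h1 : r / L < 1 := by nlinarith
    have h2 : -1 < r / L := by nlinarith
    have hp : 0 < xs * (1 + r / L) := mul_pos hxs0 (by linarith)
    have hq : 0 < xs * (1 - r / L) := mul_pos hxs0 (by linarith)
    have hApos : 0 < xs / 2 * (1 - r / L) := mul_pos (by linarith) (by linarith)
    have hAlt : xs / 2 * (1 - r / L) < Real.pi := by linarith
    have hneg : -r / L = -(r / L) := neg_div L r
    have hBpos : 0 < xs / 2 * (1 - -r / L) := by
      rw [hneg]
      exact mul_pos (by linarith) (by linarith)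
    have hBlt : xs / 2 * (1 - -r / L) < Real.pi := by
      rw [hneg]
      linarith
    exact ⟨div_pos (Real.sin_pos_of_pos_of_lt_pi hApos hAlt) hsa,
      div_pos (Real.sin_pos_of_pos_of_lt_pi hBpos hBlt) hsa⟩
end

section
/- Let υ₀, σ_s, σ_f, L > 0, λ ∈ ℝ, α > 0 and C, C' ∈ ℝ \ {0}. Define f₊(r) := C(e^{−αr} − e^{αr − 2αL}) and f₋(r) := C'(e^{αr} − e^{−αr − 2αL}). If f₊ and f₋ satisfy the ODE system of the one-dimensional slab reactor eigenvalue problem with parameters υ₀, σ_s, σ_f, L and eigenvalue λ for all r ∈ (−L, L), then: (C/C')² = 1; (C'/C)·α/sinh(2αL) = σ_s/υ₀; and α·cosh(2αL)/sinh(2αL) = −(λ − σ_f + σ_s)/υ₀. -/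
/-- If `A e^{-αr} + B e^{αr} = 0` on a nonempty open interval, then `A = B = 0`. -/
lemma two_point_lemma (α L A B : ℝ) (hα : 0 < α) (hL : 0 < L)
    (h : ∀ r ∈ Set.Ioo (-L) L, A * Real.exp (-(α * r)) + B * Real.exp (α * r) = 0) :
    A = 0 ∧ B = 0 := by
  have h0 := h 0 ⟨by linarith, hL⟩
  simp at h0
  have h1 := h (L / 2) ⟨by linarith, by linarith⟩
  have hlt : Real.exp (-(α * (L / 2))) < Real.exp (α * (L / 2)) := by
    apply Real.exp_lt_exp.mpr; nlinarith
  have hA : A = 0 := by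
    have hB : B = -A := by linarith
    rw [hB] at h1
    have : A * (Real.exp (-(α * (L / 2))) - Real.exp (α * (L / 2))) = 0 := by
      linear_combination h1
    rcases mul_eq_zero.mp this with h | h
    · exact h
    · linarith
  exact ⟨hA, by linarith⟩

/-- Constraints satisfied by the exponential solutions of the slab reactor ODE system. -/
theorem slab_exponential_constraints (υ₀ σs σf L lam α C C' : ℝ)
    (hυ₀ : 0 < υ₀) (hσs : 0 < σs) (hσf : 0 < σf) (hL : 0 < L)
    (hα : 0 < α) (hC : C ≠ 0) (hC' : C' ≠ 0)
    (fp fm : ℝ → ℝ)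
    (hfp : ∀ r, fp r = C * (Real.exp (-(α * r)) - Real.exp (α * r - 2 * α * L)))
    (hfm : ∀ r, fm r = C' * (Real.exp (α * r) - Real.exp (-(α * r) - 2 * α * L)))
    (hode : SlabODE υ₀ σs σf L lam fp fm) :
    (C / C') ^ 2 = 1 ∧
    (C' / C) * α / Real.sinh (2 * α * L) = σs / υ₀ ∧
    α * Real.cosh (2 * α * L) / Real.sinh (2 * α * L) = -(lam - σf + σs) / υ₀ := by
  have hfpe : fp = fun r => C * (Real.exp (-(α * r)) - Real.exp (α * r - 2 * α * L)) :=
    funext hfp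
  have hfme : fm = fun r => C' * (Real.exp (α * r) - Real.exp (-(α * r) - 2 * α * L)) :=
    funext hfm
  set β := lam - σf + σs with hβ
  set t := Real.exp (-(2 * α * L)) with ht
  have ht0 : 0 < t := Real.exp_pos _
  have ht1 : t < 1 := by
    rw [ht]; apply Real.exp_lt_one_iff.mpr; nlinarith
  have hυne : υ₀ ≠ 0 := ne_of_gt hυ₀
  have hexp1 : ∀ r : ℝ, Real.exp (α * r - 2 * α * L) = Real.exp (α * r) * t := by
    intro r; rw [ht, ← Real.exp_add]; ring_nf
  have hexp2 : ∀ r : ℝ, Real.exp (-(α * r) - 2 * α * L) = Real.exp (-(α * r)) * t := by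
    intro r; rw [ht, ← Real.exp_add]; ring_nf
  -- derivative facts
  have main1 : ∀ r ∈ Set.Ioo (-L) L,
      (-(υ₀ * C * α) - β * C - σs * C' * t) * Real.exp (-(α * r)) +
        (-(υ₀ * C * α * t) + β * C * t + σs * C') * Real.exp (α * r) = 0 := by
    intro r hr
    have dinner1 : HasDerivAt (fun r : ℝ => -(α * r)) (-α) r := by
      simpa using (hasDerivAt_id r).const_mul (-α)
    have dinner2 : HasDerivAt (fun r : ℝ => α * r - 2 * α * L) α r := by
      simpa using ((hasDerivAt_id r).const_mul α).sub_const (2 * α * L)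
    have d : HasDerivAt fp
        (C * (Real.exp (-(α * r)) * (-α) - Real.exp (α * r - 2 * α * L) * α)) r := by
      rw [hfpe]; exact (dinner1.exp.sub dinner2.exp).const_mul C
    have huniq := (hode r hr).1.unique d
    rw [hfp r, hfm r, hexp1 r, hexp2 r] at huniq
    field_simp at huniq
    linear_combination -huniq
  have main2 : ∀ r ∈ Set.Ioo (-L) L,
      (υ₀ * C' * α * t - σs * C - β * C' * t) * Real.exp (-(α * r)) +
        (υ₀ * C' * α + σs * C * t + β * C') * Real.exp (α * r) = 0 := by
    intro r hr
    have dinner1 : HasDerivAt (fun r : ℝ => α * r) α r := by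
      simpa using (hasDerivAt_id r).const_mul α
    have dinner2 : HasDerivAt (fun r : ℝ => -(α * r) - 2 * α * L) (-α) r := by
      simpa using (((hasDerivAt_id r).const_mul α).neg).sub_const (2 * α * L)
    have d : HasDerivAt fm
        (C' * (Real.exp (α * r) * α - Real.exp (-(α * r) - 2 * α * L) * (-α))) r := by
      rw [hfme]; exact (dinner1.exp.sub dinner2.exp).const_mul C'
    have huniq := (hode r hr).2.unique d
    rw [hfp r, hfm r, hexp1 r, hexp2 r] at huniq
    field_simp at huniq
    linear_combination -huniq
  obtain ⟨hA1, hB1⟩ := two_point_lemma α L _ _ hα hL main1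
  obtain ⟨hA2, hB2⟩ := two_point_lemma α L _ _ hα hL main2
  have r1 : 2 * υ₀ * C * α * t = σs * C' * (1 - t ^ 2) := by
    linear_combination (-t) * hA1 - hB1
  have r2 : 2 * υ₀ * C' * α * t = σs * C * (1 - t ^ 2) := by
    linear_combination hA2 + t * hB2
  have r3 : β * C * (1 - t ^ 2) = -(υ₀ * C * α * (1 + t ^ 2)) := by
    linear_combination -hA1 - t * hB1
  have h12 : (1 : ℝ) - t ^ 2 ≠ 0 := by nlinarith
  have hprod1 : Real.exp (2 * α * L) * t = 1 := by
    rw [ht, ← Real.exp_add]; simp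
  have hS : Real.sinh (2 * α * L) = ((1 - t ^ 2) / t) / 2 := by
    rw [Real.sinh_eq, ← ht]
    field_simp [ne_of_gt ht0]
    linear_combination hprod1
  have hcosh : Real.cosh (2 * α * L) = ((1 + t ^ 2) / t) / 2 := by
    rw [Real.cosh_eq, ← ht]
    field_simp [ne_of_gt ht0]
    linear_combination hprod1
  refine ⟨?_, ?_, ?_⟩
  · have key : σs * (1 - t ^ 2) * (C' ^ 2 - C ^ 2) = 0 := by
      linear_combination C * r2 - C' * r1
    have hprod : σs * (1 - t ^ 2) ≠ 0 := mul_ne_zero (ne_of_gt hσs) h12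
    have hC2 : C' ^ 2 - C ^ 2 = 0 := by
      by_contra hne
      exact mul_ne_zero hprod hne key
    field_simp
    linear_combination -hC2
  · rw [hS]
    field_simp [hC, hυne, ne_of_gt ht0, h12]
    linear_combination r2
  · have r3' : β * (1 - t ^ 2) = -(υ₀ * α * (1 + t ^ 2)) := by
      apply mul_left_cancel₀ hC
      linear_combination r3
    rw [hS, hcosh]
    field_simp [hυne, ne_of_gt ht0, h12]
    linear_combination r3'
end

section
/- Let κ₀, κ₂, λ, ε > 0. Then: (a) the choice t = √(2κ₀)/ε and k = 2κ₂/ε² satisfies κ₂/k + κ₀/t² = ε², and for this choice e^{λt}·k = 2κ₂ε⁻²·exp(λ√(2κ₀)/ε); and (b) every pair t, k > 0 satisfying κ₂/k + κ₀/t² ≤ ε² has e^{λt}·k > κ₂ε⁻²·exp(λ√κ₀/ε). -/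
/-- Feasibility and cost lower bound in the supercritical-case complexity analysis of
the NBP Monte Carlo algorithm. -/
theorem supercritical_complexity (κ₀ κ₂ lam ε : ℝ)
    (h₀ : 0 < κ₀) (h₂ : 0 < κ₂) (hlam : 0 < lam) (hε : 0 < ε) :
    (∀ t k : ℝ, t = Real.sqrt (2 * κ₀) / ε → k = 2 * κ₂ / ε ^ 2 →
        κ₂ / k + κ₀ / t ^ 2 = ε ^ 2 ∧
        Real.exp (lam * t) * k = 2 * κ₂ / ε ^ 2 * Real.exp (lam * Real.sqrt (2 * κ₀) / ε)) ∧
    (∀ t k : ℝ, 0 < t → 0 < k → κ₂ / k + κ₀ / t ^ 2 ≤ ε ^ 2 →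
        κ₂ / ε ^ 2 * Real.exp (lam * Real.sqrt κ₀ / ε) < Real.exp (lam * t) * k) := by
  constructor
  · intro t k ht hk
    have hs : Real.sqrt (2 * κ₀) ^ 2 = 2 * κ₀ := Real.sq_sqrt (by positivity)
    have ht2 : t ^ 2 = 2 * κ₀ / ε ^ 2 := by rw [ht, div_pow, hs]
    refine ⟨?_, ?_⟩
    · rw [hk, ht2]; field_simp; ring
    · rw [hk, ht, mul_div_assoc]; ring
  · intro t k htpos hkpos hcon
    have h1 : κ₂ / k < ε ^ 2 := by
      have : 0 < κ₀ / t ^ 2 := by positivity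
      linarith
    have h2 : κ₀ / t ^ 2 < ε ^ 2 := by
      have : 0 < κ₂ / k := by positivity
      linarith
    have hkb : κ₂ / ε ^ 2 < k := by
      rw [div_lt_iff₀ (by positivity)]
      have := (div_lt_iff₀ hkpos).mp h1
      linarith [this]
    have htb : Real.sqrt κ₀ / ε < t := by
      rw [div_lt_iff₀ hε]
      have hκ : κ₀ < (t * ε) ^ 2 := by
        have := (div_lt_iff₀ (by positivity : (0:ℝ) < t ^ 2)).mp h2
        nlinarith
      calc Real.sqrt κ₀ < Real.sqrt ((t * ε) ^ 2) := by
            exact Real.sqrt_lt_sqrt h₀.le hκ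
        _ = t * ε := Real.sqrt_sq (by positivity)
    have hexp : Real.exp (lam * Real.sqrt κ₀ / ε) < Real.exp (lam * t) := by
      apply Real.exp_lt_exp.mpr
      rw [mul_div_assoc]
      exact (mul_lt_mul_iff_right₀ hlam).mpr htb
    calc κ₂ / ε ^ 2 * Real.exp (lam * Real.sqrt κ₀ / ε)
        < k * Real.exp (lam * t) := by
          apply mul_lt_mul' hkb.le hexp (Real.exp_pos _).le hkpos |>.trans_le le_rfl
      _ = Real.exp (lam * t) * k := mul_comm _ _
end

section
/- Let υ₀, σ_s, L > 0 with υ₀ < 2Lσ_s. On (−L, L) define h₊(r) := min(r + L + υ₀/σ_s, L − r) and h₋(r) := min(r + L, L − r + υ₀/σ_s). Then h₊ and h₋ are strictly positive on (−L, L); h₊ is differentiable at every r ∈ (−L, L) with r ≠ −υ₀/(2σ_s), and at each such r, υ₀·h₊'(r) + σ_s·(h₋(r) − h₊(r)) ≤ 0; likewise h₋ is differentiable at every r ∈ (−L, L) with r ≠ υ₀/(2σ_s), and at each such r, −υ₀·h₋'(r) + σ_s·(h₊(r) − h₋(r)) ≤ 0. In particular, the supremum over all points of differentiability of the ratios (υ₀·h₊'(r)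 + σ_s(h₋(r) − h₊(r)))/h₊(r) and (−υ₀·h₋'(r) + σ_s(h₊(r) − h₋(r)))/h₋(r) is at most 0, hence finite. -/
/-- The one-dimensional Urts function `h₁` is positive, piecewise differentiable, and has
`(L h₁)/h₁ ≤ 0` at every point of differentiability, so that `sup (L h₁)/h₁ < ∞`. -/
theorem urts_one_dim (υ₀ σs L : ℝ) (hυ₀ : 0 < υ₀) (hσs : 0 < σs) (hL : 0 < L)
    (hlt : υ₀ < 2 * L * σs)
    (hp hm : ℝ → ℝ)
    (hhp : ∀ r, hp r = min (r + L + υ₀ / σs) (L - r))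
    (hhm : ∀ r, hm r = min (r + L) (L - r + υ₀ / σs)) :
    (∀ r ∈ Set.Ioo (-L) L, 0 < hp r ∧ 0 < hm r) ∧
    (∀ r ∈ Set.Ioo (-L) L, r ≠ -υ₀ / (2 * σs) →
        DifferentiableAt ℝ hp r ∧
        υ₀ * deriv hp r + σs * (hm r - hp r) ≤ 0 ∧
        (υ₀ * deriv hp r + σs * (hm r - hp r)) / hp r ≤ 0) ∧
    (∀ r ∈ Set.Ioo (-L) L, r ≠ υ₀ / (2 * σs) →
        DifferentiableAt ℝ hm r ∧
        -υ₀ * deriv hm r + σs * (hp r - hm r) ≤ 0 ∧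
        (-υ₀ * deriv hm r + σs * (hp r - hm r)) / hm r ≤ 0) := by
  set q : ℝ := υ₀ / σs with hq
  have hqpos : 0 < q := div_pos hυ₀ hσs
  have hυq : υ₀ = σs * q := by rw [hq]; field_simp [hσs.ne']
  have hc₁ : -υ₀ / (2 * σs) = -q / 2 := by rw [hq, neg_div, neg_div, div_div]; ring_nf
  have hc₂ : υ₀ / (2 * σs) = q / 2 := by rw [hq, div_div]; ring_nf
  have hpos : ∀ r ∈ Set.Ioo (-L) L, 0 < hp r ∧ 0 < hm r := by
    intro r hr
    obtain ⟨h1, h2⟩ := hr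
    constructor
    · rw [hhp]; exact lt_min (by linarith) (by linarith)
    · rw [hhm]; exact lt_min (by linarith) (by linarith)
  refine ⟨hpos, ?_, ?_⟩
  · intro r hr hne
    rw [hc₁] at hne
    have hpr := (hpos r hr).1
    rcases lt_or_gt_of_ne hne with hlt' | hgt'
    · -- hp = r + L + q near r, deriv 1
      have hev : hp =ᶠ[nhds r] (fun x => x + (L + q)) := by
        filter_upwards [Iio_mem_nhds hlt'] with x hx
        rw [hhp]
        have : x + L + q ≤ L - x := by
          have : x < -q / 2 := hx
          linarith
        rw [min_eq_left this]; ring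
      have hdiff : DifferentiableAt ℝ hp r :=
        ((differentiableAt_id.add_const _)).congr_of_eventuallyEq hev
      have hder : deriv hp r = 1 := by
        rw [hev.deriv_eq]; simp
      have hmr : hm r = r + L := by
        rw [hhm]
        exact min_eq_left (by linarith)
      have hpr' : hp r = r + L + q := by
        rw [hhp]
        exact min_eq_left (by linarith)
      have hnum : υ₀ * deriv hp r + σs * (hm r - hp r) ≤ 0 := by
        rw [hder, hmr, hpr', hυq]; ring_nf; linarith
      exact ⟨hdiff, hnum, div_nonpos_of_nonpos_of_nonneg hnum hpr.le⟩
    · -- hp = L - r near r, deriv -1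
      have hev : hp =ᶠ[nhds r] (fun x => L - x) := by
        filter_upwards [Ioi_mem_nhds hgt'] with x hx
        rw [hhp]
        have hx' : (-q / 2 : ℝ) < x := hx
        exact min_eq_right (by linarith)
      have hdiff : DifferentiableAt ℝ hp r :=
        ((differentiableAt_const L).sub differentiableAt_id).congr_of_eventuallyEq hev
      have hder : deriv hp r = -1 := by
        rw [hev.deriv_eq, deriv_const_sub]; simp
      have hpr' : hp r = L - r := by
        rw [hhp]
        have hx' : (-q / 2 : ℝ) < r := hgt'
        exact min_eq_right (by linarith)
      have hmb : hm r ≤ L - r + q := by rw [hhm]; exact min_le_right _ _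
      have hnum : υ₀ * deriv hp r + σs * (hm r - hp r) ≤ 0 := by
        rw [hder, hpr', hυq]
        nlinarith [mul_le_mul_of_nonneg_left hmb hσs.le]
      exact ⟨hdiff, hnum, div_nonpos_of_nonpos_of_nonneg hnum hpr.le⟩
  · intro r hr hne
    rw [hc₂] at hne
    have hmr := (hpos r hr).2
    rcases lt_or_gt_of_ne hne with hlt' | hgt'
    · -- hm = r + L near r, deriv 1
      have hev : hm =ᶠ[nhds r] (fun x => x + L) := by
        filter_upwards [Iio_mem_nhds hlt'] with x hx
        rw [hhm]
        have hx' : x < (q / 2 : ℝ) := hx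
        exact min_eq_left (by linarith)
      have hdiff : DifferentiableAt ℝ hm r :=
        (differentiableAt_id.add_const _).congr_of_eventuallyEq hev
      have hder : deriv hm r = 1 := by
        rw [hev.deriv_eq]; simp
      have hmr' : hm r = r + L := by
        rw [hhm]; exact min_eq_left (by linarith [hlt'])
      have hpb : hp r ≤ r + L + q := by rw [hhp]; exact min_le_left _ _
      have hnum : -υ₀ * deriv hm r + σs * (hp r - hm r) ≤ 0 := by
        rw [hder, hmr', hυq]
        nlinarith [mul_le_mul_of_nonneg_left hpb hσs.le]
      exact ⟨hdiff, hnum, div_nonpos_of_nonpos_of_nonneg hnum hmr.le⟩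
    · -- hm = L - r + q near r, deriv -1
      have hev : hm =ᶠ[nhds r] (fun x => L + q - x) := by
        filter_upwards [Ioi_mem_nhds hgt'] with x hx
        rw [hhm]
        have hx' : (q / 2 : ℝ) < x := hx
        rw [min_eq_right (by linarith)]; ring
      have hdiff : DifferentiableAt ℝ hm r :=
        ((differentiableAt_const (L + q)).sub differentiableAt_id).congr_of_eventuallyEq hev
      have hder : deriv hm r = -1 := by
        rw [hev.deriv_eq, deriv_const_sub]; simp
      have hmr' : hm r = L - r + q := by
        rw [hhm]; exact min_eq_right (by linarith [hgt'])
      have hpb : hp r ≤ L - r := by rw [hhp]; exact min_le_right _ _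
      have hnum : -υ₀ * deriv hm r + σs * (hp r - hm r) ≤ 0 := by
        rw [hder, hmr', hυq]
        nlinarith [mul_le_mul_of_nonneg_left hpb hσs.le]
      exact ⟨hdiff, hnum, div_nonpos_of_nonpos_of_nonneg hnum hmr.le⟩
end

section
/- Let D ⊆ ℝ³ be a nonempty open bounded set and let V = {υ ∈ ℝ³ : υ_min ≤ ‖υ‖ ≤ υ_max} with 0 < υ_min < υ_max. Let σ_s, σ_f : D × V → [0, ∞) be bounded measurable, and let π_s, π_f : D × V × V → [0, ∞) be bounded measurable with ∫_V π_s(r, υ, υ') dυ' = 1 for all (r, υ). For a bounded measurable f : D × V → ℝ define (U_t f)(r, υ) := f(r + υt, υ)·1{r + υs ∈ D for all s ∈ [0, t]}; (S f)(r, υ) := σ_s(r, υ)·∫_V (f(r, υ') − f(r, υ)) π_s(r, υ, υ') dυ'; and (F f)(r, υ) := σ_f(r, υ)·∫_V f(r, υ') π_f(r, υ, υ') dυ' − σ_f(r, υ)·f(r, υ). Fix a bounded measurable g : D × V → [0, ∞). If ψ¹, ψ² : [0, ∞) × D × V → ℝ are jointly measurable, satisfy sup_{s ≤ t} ‖ψⁱ_s‖_∞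 < ∞ for every t ≥ 0 and i = 1, 2, and both satisfy the mild equation ψ_t = U_t g + ∫₀ᵗ U_s[(S + F)ψ_{t−s}] ds pointwise on D × V for all t ≥ 0, then ψ¹_t = ψ²_t on D × V for all t ≥ 0. -/
open MeasureTheory

/-- Position/velocity space `ℝ³`. -/
abbrev E3 := EuclideanSpace ℝ (Fin 3)

open Classical in
/-- The advection semigroup with killing on exit from `D`:
`(U_t f)(r,υ) = f(r + tυ, υ) 1{r + sυ ∈ D for all s ∈ [0,t]}`. -/
noncomputable def advectOp (D : Set E3) (f : E3 → E3 → ℝ) (t : ℝ) (r υ : E3) : ℝ :=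
  if ∀ s ∈ Set.Icc (0 : ℝ) t, r + s • υ ∈ D then f (r + t • υ) υ else 0

/-- The scattering operator
`(S f)(r,υ) = σ_s(r,υ) ∫_V (f(r,υ') − f(r,υ)) π_s(r,υ,υ') dυ'`. -/
noncomputable def scatterOp (V : Set E3) (σs : E3 → E3 → ℝ)
    (πs : E3 → E3 → E3 → ℝ) (f : E3 → E3 → ℝ) (r υ : E3) : ℝ :=
  σs r υ * ∫ υ' in V, (f r υ' - f r υ) * πs r υ υ'

/-- The fission operator
`(F f)(r,υ) = σ_f(r,υ) ∫_V f(r,υ') π_f(r,υ,υ') dυ' − σ_f(r,υ) f(r,υ)`. -/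
noncomputable def fissionOp (V : Set E3) (σf : E3 → E3 → ℝ)
    (πf : E3 → E3 → E3 → ℝ) (f : E3 → E3 → ℝ) (r υ : E3) : ℝ :=
  σf r υ * (∫ υ' in V, f r υ' * πf r υ υ') - σf r υ * f r υ

/-- The set of times for which the advection path stays in `D` is order-connected. -/
lemma advCond_measurableSet (D : Set E3) (r υ : E3) :
    MeasurableSet {s : ℝ | ∀ s' ∈ Set.Icc (0:ℝ) s, r + s' • υ ∈ D} := by
  have h : ({s : ℝ | ∀ s' ∈ Set.Icc (0:ℝ) s, r + s' • υ ∈ D}).OrdConnected :=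
    ⟨fun x hx y hy z hz s' hs' => hy s' ⟨hs'.1, hs'.2.trans hz.2⟩⟩
  exact h.measurableSet

/-- Bounded measurable functions are integrable on a finite-measure set. -/
lemma integrableOn_V (V : Set E3) (hVmeas : MeasurableSet V) (hVfin : volume V ≠ ⊤)
    (f : E3 → ℝ) (hf : Measurable f) (M : ℝ) (hM : ∀ x ∈ V, |f x| ≤ M) :
    IntegrableOn f V volume := by
  refine Measure.integrableOn_of_bounded (M := M) hVfin hf.aestronglyMeasurable ?_
  exact (ae_restrict_iff' hVmeas).2 (Filter.Eventually.of_forall fun x hx => by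
    simpa [Real.norm_eq_abs] using hM x hx)

/-- Measurability of the Duhamel integrand in the time variable. -/
lemma duhamel_integrand_measurable
    (D V : Set E3)
    (σs σf : E3 → E3 → ℝ)
    (hσs_meas : Measurable (Function.uncurry σs))
    (hσf_meas : Measurable (Function.uncurry σf))
    (πs πf : E3 → E3 → E3 → ℝ)
    (hπs_meas : Measurable fun p : E3 × E3 × E3 => πs p.1 p.2.1 p.2.2)
    (hπf_meas : Measurable fun p : E3 × E3 × E3 => πf p.1 p.2.1 p.2.2)
    (ψ : ℝ → E3 → E3 → ℝ)
    (hψmeas : Measurable fun p : ℝ × E3 × E3 => ψ p.1 p.2.1 p.2.2)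
    (u : ℝ) (r υ : E3) :
    Measurable (fun s => advectOp D
      (fun a b => scatterOp V σs πs (ψ (u - s)) a b + fissionOp V σf πf (ψ (u - s)) a b)
      s r υ) := by
  have he : Measurable fun s : ℝ => r + s • υ :=
    (continuous_const.add (continuous_id.smul continuous_const)).measurable
  have hψs : Measurable fun p : ℝ × E3 => ψ (u - p.1) (r + p.1 • υ) p.2 :=
    hψmeas.comp ((measurable_const.sub measurable_fst).prodMk
      ((he.comp measurable_fst).prodMk measurable_snd))
  have hψat : Measurable fun s : ℝ => ψ (u - s) (r + s • υ) υ :=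
    hψmeas.comp ((measurable_const.sub measurable_id).prodMk (he.prodMk measurable_const))
  have hπsj : Measurable fun p : ℝ × E3 => πs (r + p.1 • υ) υ p.2 :=
    hπs_meas.comp ((he.comp measurable_fst).prodMk (measurable_const.prodMk measurable_snd))
  have hπfj : Measurable fun p : ℝ × E3 => πf (r + p.1 • υ) υ p.2 :=
    hπf_meas.comp ((he.comp measurable_fst).prodMk (measurable_const.prodMk measurable_snd))
  have hσsat : Measurable fun s : ℝ => σs (r + s • υ) υ :=
    hσs_meas.comp (he.prodMk measurable_const)
  have hσfat : Measurable fun s : ℝ => σf (r + s • υ) υ :=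
    hσf_meas.comp (he.prodMk measurable_const)
  have hI1 : Measurable fun s : ℝ =>
      ∫ υ' in V, (ψ (u - s) (r + s • υ) υ' - ψ (u - s) (r + s • υ) υ) * πs (r + s • υ) υ υ' := by
    have hsm : StronglyMeasurable fun p : ℝ × E3 =>
        (ψ (u - p.1) (r + p.1 • υ) p.2 - ψ (u - p.1) (r + p.1 • υ) υ) * πs (r + p.1 • υ) υ p.2 :=
      ((hψs.sub (hψat.comp measurable_fst)).mul hπsj).stronglyMeasurable
    exact (hsm.integral_prod_right' (ν := volume.restrict V)).measurable
  have hI2 : Measurable fun s : ℝ =>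
      ∫ υ' in V, ψ (u - s) (r + s • υ) υ' * πf (r + s • υ) υ υ' := by
    have hsm : StronglyMeasurable fun p : ℝ × E3 =>
        ψ (u - p.1) (r + p.1 • υ) p.2 * πf (r + p.1 • υ) υ p.2 :=
      (hψs.mul hπfj).stronglyMeasurable
    exact (hsm.integral_prod_right' (ν := volume.restrict V)).measurable
  have hh : Measurable fun s : ℝ =>
      scatterOp V σs πs (ψ (u - s)) (r + s • υ) υ + fissionOp V σf πf (ψ (u - s)) (r + s • υ) υ := by
    simp only [scatterOp, fissionOp]
    exact (hσsat.mul hI1).add ((hσfat.mul hI2).sub (hσfat.mul hψat))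
  simp only [advectOp]
  exact Measurable.ite (advCond_measurableSet D r υ) hh measurable_const

/-- Pointwise bound on the sum of scattering and fission operators applied to a function
bounded by `B` on `V` (at fixed `x`), using `∫ πs = 1`. -/
lemma ops_pointwise_bound
    (V : Set E3) (hVmeas : MeasurableSet V) (hVfin : volume V ≠ ⊤)
    (σs σf : E3 → E3 → ℝ)
    (Ms Mf : ℝ) (hMs : ∀ r υ, |σs r υ| ≤ Ms) (hMf : ∀ r υ, |σf r υ| ≤ Mf)
    (πs πf : E3 → E3 → E3 → ℝ)
    (hπs_nonneg : ∀ r υ υ', 0 ≤ πs r υ υ')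
    (Mπs Mπf : ℝ) (hMπs : ∀ r υ υ', |πs r υ υ'| ≤ Mπs) (hMπf : ∀ r υ υ', |πf r υ υ'| ≤ Mπf)
    (hπs_prob : ∀ r υ, (∫ υ' in V, πs r υ υ') = 1)
    (f : E3 → E3 → ℝ) (x υ' : E3) (hυ' : υ' ∈ V)
    (hfm : Measurable fun υ'' => f x υ'')
    (B : ℝ) (hB : ∀ υ'' ∈ V, |f x υ''| ≤ B)
    (hπsm : Measurable fun υ'' => πs x υ' υ'')
    (hπfm : Measurable fun υ'' => πf x υ' υ'') :
    |scatterOp V σs πs f x υ' + fissionOp V σf πf f x υ'| ≤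
      (2 * Ms + Mf * (Mπf * (volume V).toReal + 1)) * B := by
  have hB0 : 0 ≤ B := (abs_nonneg _).trans (hB υ' hυ')
  have hMs0 : 0 ≤ Ms := (abs_nonneg _).trans (hMs 0 0)
  have hMf0 : 0 ≤ Mf := (abs_nonneg _).trans (hMf 0 0)
  have hMπf0 : 0 ≤ Mπf := (abs_nonneg _).trans (hMπf 0 0 0)
  have hμV0 : (0:ℝ) ≤ (volume V).toReal := ENNReal.toReal_nonneg
  -- integrability facts
  have hint1 : IntegrableOn (fun υ'' => (f x υ'' - f x υ') * πs x υ' υ'') V volume := by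
    refine integrableOn_V V hVmeas hVfin _ ((hfm.sub measurable_const).mul hπsm)
      ((2 * B) * Mπs) fun y hy => ?_
    rw [abs_mul]
    refine mul_le_mul ?_ (hMπs _ _ _) (abs_nonneg _) (by linarith)
    calc |f x y - f x υ'| ≤ |f x y| + |f x υ'| := abs_sub _ _
      _ ≤ 2 * B := by have := hB y hy; have := hB υ' hυ'; linarith
  have hintπs : IntegrableOn (fun υ'' => πs x υ' υ'') V volume :=
    integrableOn_V V hVmeas hVfin _ hπsm Mπs fun y _ => hMπs _ _ _
  -- scattering bound
  have hs1 : |∫ υ'' in V, (f x υ'' - f x υ') * πs x υ' υ''| ≤ 2 * B := by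
    have step1 : |∫ υ'' in V, (f x υ'' - f x υ') * πs x υ' υ''|
        ≤ ∫ υ'' in V, |(f x υ'' - f x υ') * πs x υ' υ''| := by
      have h := norm_integral_le_integral_norm (μ := volume.restrict V)
          (f := fun υ'' => (f x υ'' - f x υ') * πs x υ' υ'')
      simp only [Real.norm_eq_abs] at h
      exact h
    have step2 : ∫ υ'' in V, |(f x υ'' - f x υ') * πs x υ' υ''|
        ≤ ∫ υ'' in V, (2 * B) * πs x υ' υ'' := by
      refine setIntegral_mono_on hint1.abs (hintπs.const_mul _) hVmeas fun y hy => ?_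
      rw [abs_mul, abs_of_nonneg (hπs_nonneg x υ' y)]
      refine mul_le_mul_of_nonneg_right ?_ (hπs_nonneg x υ' y)
      calc |f x y - f x υ'| ≤ |f x y| + |f x υ'| := abs_sub _ _
        _ ≤ 2 * B := by have := hB y hy; have := hB υ' hυ'; linarith
    have step3 : ∫ υ'' in V, (2 * B) * πs x υ' υ'' = 2 * B := by
      rw [integral_const_mul, hπs_prob x υ', mul_one]
    linarith
  -- fission integral bound
  have hs2 : |∫ υ'' in V, f x υ'' * πf x υ' υ''| ≤ B * Mπf * (volume V).toReal := by
    have := norm_setIntegral_le_of_norm_le_const (μ := volume) (s := V)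
      (f := fun υ'' => f x υ'' * πf x υ' υ'') hVfin.lt_top
      (C := B * Mπf) (fun y hy => by
        rw [Real.norm_eq_abs, abs_mul]
        exact mul_le_mul (hB y hy) (hMπf _ _ _) (abs_nonneg _) hB0)
    rw [measureReal_def] at this
    simpa [Real.norm_eq_abs, mul_assoc] using this
  -- assemble
  simp only [scatterOp, fissionOp]
  have h1 : |σs x υ' * ∫ υ'' in V, (f x υ'' - f x υ') * πs x υ' υ''| ≤ Ms * (2 * B) := by
    rw [abs_mul]; exact mul_le_mul (hMs _ _) hs1 (abs_nonneg _) hMs0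
  have h2 : |σf x υ' * ∫ υ'' in V, f x υ'' * πf x υ' υ''| ≤ Mf * (B * Mπf * (volume V).toReal) := by
    rw [abs_mul]; exact mul_le_mul (hMf _ _) hs2 (abs_nonneg _) hMf0
  have h3 : |σf x υ' * f x υ'| ≤ Mf * B := by
    rw [abs_mul]; exact mul_le_mul (hMf _ _) (hB υ' hυ') (abs_nonneg _) hMf0
  calc |σs x υ' * (∫ υ'' in V, (f x υ'' - f x υ') * πs x υ' υ'') +
        (σf x υ' * (∫ υ'' in V, f x υ'' * πf x υ' υ'') - σf x υ' * f x υ')|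
      ≤ |σs x υ' * ∫ υ'' in V, (f x υ'' - f x υ') * πs x υ' υ''| +
        (|σf x υ' * ∫ υ'' in V, f x υ'' * πf x υ' υ''| + |σf x υ' * f x υ'|) := by
        refine (abs_add_le _ _).trans (add_le_add_right (abs_sub _ _) _)
    _ ≤ Ms * (2 * B) + (Mf * (B * Mπf * (volume V).toReal) + Mf * B) := by
        exact add_le_add h1 (add_le_add h2 h3)
    _ = (2 * Ms + Mf * (Mπf * (volume V).toReal + 1)) * B := by ring

/-- Interval integrability of the Duhamel integrand. -/
lemma duhamel_integrand_integrable
    (D V : Set E3) (hVmeas : MeasurableSet V) (hVfin : volume V ≠ ⊤)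
    (σs σf : E3 → E3 → ℝ)
    (hσs_meas : Measurable (Function.uncurry σs))
    (hσf_meas : Measurable (Function.uncurry σf))
    (Ms Mf : ℝ) (hMs : ∀ r υ, |σs r υ| ≤ Ms) (hMf : ∀ r υ, |σf r υ| ≤ Mf)
    (πs πf : E3 → E3 → E3 → ℝ)
    (hπs_meas : Measurable fun p : E3 × E3 × E3 => πs p.1 p.2.1 p.2.2)
    (hπf_meas : Measurable fun p : E3 × E3 × E3 => πf p.1 p.2.1 p.2.2)
    (hπs_nonneg : ∀ r υ υ', 0 ≤ πs r υ υ')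
    (Mπs Mπf : ℝ) (hMπs : ∀ r υ υ', |πs r υ υ'| ≤ Mπs) (hMπf : ∀ r υ υ', |πf r υ υ'| ≤ Mπf)
    (hπs_prob : ∀ r υ, (∫ υ' in V, πs r υ υ') = 1)
    (ψ : ℝ → E3 → E3 → ℝ)
    (hψmeas : Measurable fun p : ℝ × E3 × E3 => ψ p.1 p.2.1 p.2.2)
    (T Mψ : ℝ) (hMψ0 : 0 ≤ Mψ)
    (hψbdd : ∀ s ∈ Set.Icc (0:ℝ) T, ∀ r ∈ D, ∀ υ' ∈ V, |ψ s r υ'| ≤ Mψ)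
    (u : ℝ) (hu : u ∈ Set.Icc (0:ℝ) T) (r υ : E3) (hυ : υ ∈ V) :
    IntervalIntegrable (fun s => advectOp D
      (fun a b => scatterOp V σs πs (ψ (u - s)) a b + fissionOp V σf πf (ψ (u - s)) a b)
      s r υ) volume 0 u := by
  have hMs0 : 0 ≤ Ms := (abs_nonneg _).trans (hMs 0 0)
  have hMf0 : 0 ≤ Mf := (abs_nonneg _).trans (hMf 0 0)
  have hMπf0 : 0 ≤ Mπf := (abs_nonneg _).trans (hMπf 0 0 0)
  have hμV0 : (0:ℝ) ≤ (volume V).toReal := ENNReal.toReal_nonneg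
  have hC0 : 0 ≤ 2 * Ms + Mf * (Mπf * (volume V).toReal + 1) := by
    have := mul_nonneg hMf0 (by nlinarith : (0:ℝ) ≤ Mπf * (volume V).toReal + 1)
    linarith
  have hmble := duhamel_integrand_measurable D V σs σf hσs_meas hσf_meas πs πf
    hπs_meas hπf_meas ψ hψmeas u r υ
  rw [intervalIntegrable_iff, Set.uIoc_of_le hu.1]
  refine Measure.integrableOn_of_bounded
    (M := (2 * Ms + Mf * (Mπf * (volume V).toReal + 1)) * Mψ)
    measure_Ioc_lt_top.ne hmble.aestronglyMeasurable ?_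
  refine (ae_restrict_iff' measurableSet_Ioc).2 (Filter.Eventually.of_forall fun s hs => ?_)
  rw [Real.norm_eq_abs]
  simp only [advectOp]
  split_ifs with hcond
  · have hxD : r + s • υ ∈ D := hcond s ⟨hs.1.le, le_rfl⟩
    have hvs : u - s ∈ Set.Icc (0:ℝ) T := ⟨by linarith [hs.2], by
      have := hs.1; have := hu.2; linarith⟩
    have hfm : Measurable fun υ'' => ψ (u - s) (r + s • υ) υ'' :=
      hψmeas.comp (measurable_const.prodMk (measurable_const.prodMk measurable_id))
    have hπsm : Measurable fun υ'' => πs (r + s • υ) υ υ'' :=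
      hπs_meas.comp (measurable_const.prodMk (measurable_const.prodMk measurable_id))
    have hπfm : Measurable fun υ'' => πf (r + s • υ) υ υ'' :=
      hπf_meas.comp (measurable_const.prodMk (measurable_const.prodMk measurable_id))
    exact ops_pointwise_bound V hVmeas hVfin σs σf Ms Mf hMs hMf πs πf hπs_nonneg
      Mπs Mπf hMπs hMπf hπs_prob (ψ (u - s)) (r + s • υ) υ hυ hfm Mψ
      (fun υ'' h => hψbdd _ hvs _ hxD _ h) hπsm hπfm
  · simpa using mul_nonneg hC0 hMψ0

/-- Uniqueness of time-locally-bounded solutions of the mild (Duhamel) form of the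
backwards neutron transport equation. -/
theorem mild_NTE_uniqueness
    (D : Set E3) (hDne : D.Nonempty) (hDopen : IsOpen D)
    (hDbdd : Bornology.IsBounded D)
    (υmin υmax : ℝ) (h0 : 0 < υmin) (hmm : υmin < υmax)
    (V : Set E3) (hV : V = {υ : E3 | υmin ≤ ‖υ‖ ∧ ‖υ‖ ≤ υmax})
    (σs σf : E3 → E3 → ℝ)
    (hσs_meas : Measurable (Function.uncurry σs))
    (hσf_meas : Measurable (Function.uncurry σf))
    (hσs_nonneg : ∀ r υ, 0 ≤ σs r υ) (hσf_nonneg : ∀ r υ, 0 ≤ σf r υ)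
    (hσs_bdd : ∃ M : ℝ, ∀ r υ, σs r υ ≤ M) (hσf_bdd : ∃ M : ℝ, ∀ r υ, σf r υ ≤ M)
    (πs πf : E3 → E3 → E3 → ℝ)
    (hπs_meas : Measurable fun p : E3 × E3 × E3 => πs p.1 p.2.1 p.2.2)
    (hπf_meas : Measurable fun p : E3 × E3 × E3 => πf p.1 p.2.1 p.2.2)
    (hπs_nonneg : ∀ r υ υ', 0 ≤ πs r υ υ') (hπf_nonneg : ∀ r υ υ', 0 ≤ πf r υ υ')
    (hπs_bdd : ∃ M : ℝ, ∀ r υ υ', πs r υ υ' ≤ M)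
    (hπf_bdd : ∃ M : ℝ, ∀ r υ υ', πf r υ υ' ≤ M)
    (hπs_prob : ∀ r υ, (∫ υ' in V, πs r υ υ') = 1)
    (g : E3 → E3 → ℝ) (hg_meas : Measurable (Function.uncurry g))
    (hg_nonneg : ∀ r υ, 0 ≤ g r υ) (hg_bdd : ∃ M : ℝ, ∀ r υ, g r υ ≤ M)
    (ψ₁ ψ₂ : ℝ → E3 → E3 → ℝ)
    (hmeas₁ : Measurable fun p : ℝ × E3 × E3 => ψ₁ p.1 p.2.1 p.2.2)
    (hmeas₂ : Measurable fun p : ℝ × E3 × E3 => ψ₂ p.1 p.2.1 p.2.2)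
    (hbdd₁ : ∀ t : ℝ, 0 ≤ t → ∃ M : ℝ, ∀ s ∈ Set.Icc 0 t, ∀ r ∈ D, ∀ υ ∈ V, |ψ₁ s r υ| ≤ M)
    (hbdd₂ : ∀ t : ℝ, 0 ≤ t → ∃ M : ℝ, ∀ s ∈ Set.Icc 0 t, ∀ r ∈ D, ∀ υ ∈ V, |ψ₂ s r υ| ≤ M)
    (hmild₁ : ∀ t : ℝ, 0 ≤ t → ∀ r ∈ D, ∀ υ ∈ V,
        ψ₁ t r υ = advectOp D g t r υ +
          ∫ s in (0 : ℝ)..t, advectOp D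
            (fun r' υ' => scatterOp V σs πs (ψ₁ (t - s)) r' υ' +
              fissionOp V σf πf (ψ₁ (t - s)) r' υ') s r υ)
    (hmild₂ : ∀ t : ℝ, 0 ≤ t → ∀ r ∈ D, ∀ υ ∈ V,
        ψ₂ t r υ = advectOp D g t r υ +
          ∫ s in (0 : ℝ)..t, advectOp D
            (fun r' υ' => scatterOp V σs πs (ψ₂ (t - s)) r' υ' +
              fissionOp V σf πf (ψ₂ (t - s)) r' υ') s r υ) :
    ∀ t : ℝ, 0 ≤ t → ∀ r ∈ D, ∀ υ ∈ V, ψ₁ t r υ = ψ₂ t r υ := by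
  obtain ⟨Ms, hMs'⟩ := hσs_bdd
  obtain ⟨Mf, hMf'⟩ := hσf_bdd
  obtain ⟨Mπs, hMπs'⟩ := hπs_bdd
  obtain ⟨Mπf, hMπf'⟩ := hπf_bdd
  have hMs : ∀ a b, |σs a b| ≤ Ms := fun a b => by
    rw [abs_of_nonneg (hσs_nonneg a b)]; exact hMs' a b
  have hMf : ∀ a b, |σf a b| ≤ Mf := fun a b => by
    rw [abs_of_nonneg (hσf_nonneg a b)]; exact hMf' a b
  have hMπs : ∀ a b c, |πs a b c| ≤ Mπs := fun a b c => by
    rw [abs_of_nonneg (hπs_nonneg a b c)]; exact hMπs' a b c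
  have hMπf : ∀ a b c, |πf a b c| ≤ Mπf := fun a b c => by
    rw [abs_of_nonneg (hπf_nonneg a b c)]; exact hMπf' a b c
  have hMs0 : 0 ≤ Ms := (abs_nonneg _).trans (hMs 0 0)
  have hMf0 : 0 ≤ Mf := (abs_nonneg _).trans (hMf 0 0)
  have hMπf0 : 0 ≤ Mπf := (abs_nonneg _).trans (hMπf 0 0 0)
  have hVmeas : MeasurableSet V := by
    rw [hV, Set.setOf_and]
    exact ((isClosed_le continuous_const continuous_norm).inter
      (isClosed_le continuous_norm continuous_const)).measurableSet
  have hVfin : volume V ≠ ⊤ := by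
    rw [hV]
    refine ne_of_lt (lt_of_le_of_lt (measure_mono fun x hx => ?_)
      ((isCompact_closedBall (0:E3) υmax).measure_lt_top))
    simpa [Metric.mem_closedBall, dist_zero_right] using hx.2
  intro t ht r hr υ hυ
  obtain ⟨M₁, hM₁⟩ := hbdd₁ t ht
  obtain ⟨M₂, hM₂⟩ := hbdd₂ t ht
  have hM₁0 : 0 ≤ M₁ := (abs_nonneg _).trans (hM₁ 0 ⟨le_rfl, ht⟩ r hr υ hυ)
  have hM₂0 : 0 ≤ M₂ := (abs_nonneg _).trans (hM₂ 0 ⟨le_rfl, ht⟩ r hr υ hυ)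
  set μV := (volume V).toReal with hμVdef
  have hμV0 : (0:ℝ) ≤ μV := ENNReal.toReal_nonneg
  set C := 2 * Ms + Mf * (Mπf * μV + 1) with hCdef
  have hC0 : 0 ≤ C := by
    have := mul_nonneg hMf0 (by nlinarith : (0:ℝ) ≤ Mπf * μV + 1)
    rw [hCdef]; linarith
  set M := M₁ + M₂ with hMdef
  have hM0 : 0 ≤ M := by rw [hMdef]; linarith
  have hMb : ∀ s ∈ Set.Icc (0:ℝ) t, ∀ a ∈ D, ∀ b ∈ V, |ψ₁ s a b - ψ₂ s a b| ≤ M :=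
    fun s hs a ha b hb => (abs_sub _ _).trans
      (add_le_add (hM₁ s hs a ha b hb) (hM₂ s hs a ha b hb))
  have key : ∀ n : ℕ, ∀ u ∈ Set.Icc (0:ℝ) t, ∀ a ∈ D, ∀ b ∈ V,
      |ψ₁ u a b - ψ₂ u a b| ≤ M * C ^ n * u ^ n / n.factorial := by
    intro n
    induction n with
    | zero => intro u hu a ha b hb; simpa using hMb u hu a ha b hb
    | succ n ih =>
      intro u hu a ha b hb
      have hfact0 : (0:ℝ) < (n.factorial : ℝ) := by exact_mod_cast n.factorial_pos
      have int₁ := duhamel_integrand_integrable D V hVmeas hVfin σs σf hσs_meas hσf_meas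
        Ms Mf hMs hMf πs πf hπs_meas hπf_meas hπs_nonneg Mπs Mπf hMπs hMπf hπs_prob
        ψ₁ hmeas₁ t M₁ hM₁0 hM₁ u hu a b hb
      have int₂ := duhamel_integrand_integrable D V hVmeas hVfin σs σf hσs_meas hσf_meas
        Ms Mf hMs hMf πs πf hπs_meas hπf_meas hπs_nonneg Mπs Mπf hMπs hMπf hπs_prob
        ψ₂ hmeas₂ t M₂ hM₂0 hM₂ u hu a b hb
      have hsub : ψ₁ u a b - ψ₂ u a b = ∫ s in (0:ℝ)..u,
          (advectOp D (fun a' b' => scatterOp V σs πs (ψ₁ (u - s)) a' b' +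
              fissionOp V σf πf (ψ₁ (u - s)) a' b') s a b
           - advectOp D (fun a' b' => scatterOp V σs πs (ψ₂ (u - s)) a' b' +
              fissionOp V σf πf (ψ₂ (u - s)) a' b') s a b) := by
        rw [intervalIntegral.integral_sub int₁ int₂,
          hmild₁ u hu.1 a ha b hb, hmild₂ u hu.1 a ha b hb]
        ring
      have hgint : IntervalIntegrable
          (fun s : ℝ => M * C ^ n * C / (n.factorial : ℝ) * (u - s) ^ n) volume 0 u :=
        (continuous_const.mul ((continuous_const.sub continuous_id).pow n)).intervalIntegrable 0 u
      have hboundae : ∀ s ∈ Set.Ioc (0:ℝ) u,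
          ‖advectOp D (fun a' b' => scatterOp V σs πs (ψ₁ (u - s)) a' b' +
              fissionOp V σf πf (ψ₁ (u - s)) a' b') s a b
           - advectOp D (fun a' b' => scatterOp V σs πs (ψ₂ (u - s)) a' b' +
              fissionOp V σf πf (ψ₂ (u - s)) a' b') s a b‖ ≤
            M * C ^ n * C / (n.factorial : ℝ) * (u - s) ^ n := by
        intro s hs
        rw [Real.norm_eq_abs]
        have husn : (0:ℝ) ≤ (u - s) ^ n := pow_nonneg (by linarith [hs.2]) n
        have hBnonneg : (0:ℝ) ≤ M * C ^ n * (u - s) ^ n / (n.factorial : ℝ) :=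
          div_nonneg (mul_nonneg (mul_nonneg hM0 (pow_nonneg hC0 n)) husn) hfact0.le
        by_cases hcond : ∀ s' ∈ Set.Icc (0:ℝ) s, a + s' • b ∈ D
        · simp only [advectOp]
          rw [if_pos hcond, if_pos hcond]
          have hxD : a + s • b ∈ D := hcond s ⟨hs.1.le, le_rfl⟩
          have hvs : u - s ∈ Set.Icc (0:ℝ) t :=
            ⟨by linarith [hs.2], by have := hs.1; have := hu.2; linarith⟩
          have hf1 : Measurable fun y => ψ₁ (u - s) (a + s • b) y :=
            hmeas₁.comp (measurable_const.prodMk (measurable_const.prodMk measurable_id))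
          have hf2 : Measurable fun y => ψ₂ (u - s) (a + s • b) y :=
            hmeas₂.comp (measurable_const.prodMk (measurable_const.prodMk measurable_id))
          have hπsm : Measurable fun y => πs (a + s • b) b y :=
            hπs_meas.comp (measurable_const.prodMk (measurable_const.prodMk measurable_id))
          have hπfm : Measurable fun y => πf (a + s • b) b y :=
            hπf_meas.comp (measurable_const.prodMk (measurable_const.prodMk measurable_id))
          have hb1 : ∀ y ∈ V, |ψ₁ (u - s) (a + s • b) y| ≤ M₁ := fun y hy =>
            hM₁ _ hvs _ hxD _ hy
          have hb2 : ∀ y ∈ V, |ψ₂ (u - s) (a + s • b) y| ≤ M₂ := fun y hy =>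
            hM₂ _ hvs _ hxD _ hy
          have hi1s : IntegrableOn (fun y =>
              (ψ₁ (u - s) (a + s • b) y - ψ₁ (u - s) (a + s • b) b) * πs (a + s • b) b y)
              V volume := by
            refine integrableOn_V V hVmeas hVfin _ ((hf1.sub measurable_const).mul hπsm)
              ((2 * M₁) * Mπs) fun y hy => ?_
            rw [abs_mul]
            refine mul_le_mul ?_ (hMπs _ _ _) (abs_nonneg _) (by linarith)
            calc |ψ₁ (u - s) (a + s • b) y - ψ₁ (u - s) (a + s • b) b|
                ≤ |ψ₁ (u - s) (a + s • b) y| + |ψ₁ (u - s) (a + s • b) b| := abs_sub _ _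
              _ ≤ 2 * M₁ := by have := hb1 y hy; have := hb1 b hb; linarith
          have hi2s : IntegrableOn (fun y =>
              (ψ₂ (u - s) (a + s • b) y - ψ₂ (u - s) (a + s • b) b) * πs (a + s • b) b y)
              V volume := by
            refine integrableOn_V V hVmeas hVfin _ ((hf2.sub measurable_const).mul hπsm)
              ((2 * M₂) * Mπs) fun y hy => ?_
            rw [abs_mul]
            refine mul_le_mul ?_ (hMπs _ _ _) (abs_nonneg _) (by linarith)
            calc |ψ₂ (u - s) (a + s • b) y - ψ₂ (u - s) (a + s • b) b|
                ≤ |ψ₂ (u - s) (a + s • b) y| + |ψ₂ (u - s) (a + s • b) b| := abs_sub _ _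
              _ ≤ 2 * M₂ := by have := hb2 y hy; have := hb2 b hb; linarith
          have hi1f : IntegrableOn (fun y =>
              ψ₁ (u - s) (a + s • b) y * πf (a + s • b) b y) V volume := by
            refine integrableOn_V V hVmeas hVfin _ (hf1.mul hπfm) (M₁ * Mπf) fun y hy => ?_
            rw [abs_mul]
            exact mul_le_mul (hb1 y hy) (hMπf _ _ _) (abs_nonneg _) hM₁0
          have hi2f : IntegrableOn (fun y =>
              ψ₂ (u - s) (a + s • b) y * πf (a + s • b) b y) V volume := by
            refine integrableOn_V V hVmeas hVfin _ (hf2.mul hπfm) (M₂ * Mπf) fun y hy => ?_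
            rw [abs_mul]
            exact mul_le_mul (hb2 y hy) (hMπf _ _ _) (abs_nonneg _) hM₂0
          have hdiff : (scatterOp V σs πs (ψ₁ (u - s)) (a + s • b) b +
              fissionOp V σf πf (ψ₁ (u - s)) (a + s • b) b) -
              (scatterOp V σs πs (ψ₂ (u - s)) (a + s • b) b +
              fissionOp V σf πf (ψ₂ (u - s)) (a + s • b) b) =
              scatterOp V σs πs (fun c y => ψ₁ (u - s) c y - ψ₂ (u - s) c y) (a + s • b) b +
              fissionOp V σf πf (fun c y => ψ₁ (u - s) c y - ψ₂ (u - s) c y) (a + s • b) b := by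
            simp only [scatterOp, fissionOp]
            have e1 : ∫ y in V, ((ψ₁ (u - s) (a + s • b) y - ψ₂ (u - s) (a + s • b) y) -
                (ψ₁ (u - s) (a + s • b) b - ψ₂ (u - s) (a + s • b) b)) * πs (a + s • b) b y =
                (∫ y in V,
                  (ψ₁ (u - s) (a + s • b) y - ψ₁ (u - s) (a + s • b) b) * πs (a + s • b) b y) -
                ∫ y in V,
                  (ψ₂ (u - s) (a + s • b) y - ψ₂ (u - s) (a + s • b) b) * πs (a + s • b) b y := by
              rw [← integral_sub hi1s hi2s]
              congr 1; funext y; ring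
            have e2 : ∫ y in V, (ψ₁ (u - s) (a + s • b) y - ψ₂ (u - s) (a + s • b) y) *
                πf (a + s • b) b y =
                (∫ y in V, ψ₁ (u - s) (a + s • b) y * πf (a + s • b) b y) -
                ∫ y in V, ψ₂ (u - s) (a + s • b) y * πf (a + s • b) b y := by
              rw [← integral_sub hi1f hi2f]
              congr 1; funext y; ring
            rw [e1, e2]; ring
          rw [hdiff]
          have hbnd := ops_pointwise_bound V hVmeas hVfin σs σf Ms Mf hMs hMf πs πf
            hπs_nonneg Mπs Mπf hMπs hMπf hπs_prob
            (fun c y => ψ₁ (u - s) c y - ψ₂ (u - s) c y) (a + s • b) b hb (hf1.sub hf2)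
            (M * C ^ n * (u - s) ^ n / (n.factorial : ℝ))
            (fun y hy => ih (u - s) hvs _ hxD y hy) hπsm hπfm
          have hCeq : (2 * Ms + Mf * (Mπf * (volume V).toReal + 1)) = C := by
            rw [hCdef, hμVdef]
          rw [hCeq] at hbnd
          calc |scatterOp V σs πs (fun c y => ψ₁ (u - s) c y - ψ₂ (u - s) c y) (a + s • b) b +
                fissionOp V σf πf (fun c y => ψ₁ (u - s) c y - ψ₂ (u - s) c y) (a + s • b) b|
              ≤ C * (M * C ^ n * (u - s) ^ n / (n.factorial : ℝ)) := hbnd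
            _ = M * C ^ n * C / (n.factorial : ℝ) * (u - s) ^ n := by ring
        · simp only [advectOp]
          rw [if_neg hcond, if_neg hcond]
          have heq : M * C ^ n * C / (n.factorial : ℝ) * (u - s) ^ n =
              C * (M * C ^ n * (u - s) ^ n / (n.factorial : ℝ)) := by ring
          rw [heq]
          simpa using mul_nonneg hC0 hBnonneg
      have hnorm := intervalIntegral.norm_integral_le_abs_of_norm_le (μ := volume)
        (a := 0) (b := u)
        (f := fun s => advectOp D (fun a' b' => scatterOp V σs πs (ψ₁ (u - s)) a' b' +
              fissionOp V σf πf (ψ₁ (u - s)) a' b') s a b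
           - advectOp D (fun a' b' => scatterOp V σs πs (ψ₂ (u - s)) a' b' +
              fissionOp V σf πf (ψ₂ (u - s)) a' b') s a b)
        (g := fun s => M * C ^ n * C / (n.factorial : ℝ) * (u - s) ^ n)
        (by
          rw [Set.uIoc_of_le hu.1]
          exact (ae_restrict_iff' measurableSet_Ioc).2
            (Filter.Eventually.of_forall hboundae)) hgint
      have hIpow : ∫ s in (0:ℝ)..u, (u - s) ^ n = u ^ (n + 1) / (n + 1) := by
        rw [intervalIntegral.integral_comp_sub_left (fun x : ℝ => x ^ n) u]
        simp [integral_pow]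
      have hIg : ∫ s in (0:ℝ)..u, M * C ^ n * C / (n.factorial : ℝ) * (u - s) ^ n =
          M * C ^ n * C / (n.factorial : ℝ) * (u ^ (n + 1) / (n + 1)) := by
        rw [intervalIntegral.integral_const_mul, hIpow]
      have hknn : (0:ℝ) ≤ M * C ^ n * C / (n.factorial : ℝ) * (u ^ (n + 1) / (n + 1)) := by
        have h1 : (0:ℝ) ≤ M * C ^ n * C / (n.factorial : ℝ) :=
          div_nonneg (mul_nonneg (mul_nonneg hM0 (pow_nonneg hC0 n)) hC0) hfact0.le
        have h2 : (0:ℝ) ≤ u ^ (n + 1) / (n + 1) :=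
          div_nonneg (pow_nonneg hu.1 _) (by positivity)
        exact mul_nonneg h1 h2
      calc |ψ₁ u a b - ψ₂ u a b|
          = ‖∫ s in (0:ℝ)..u,
            (advectOp D (fun a' b' => scatterOp V σs πs (ψ₁ (u - s)) a' b' +
              fissionOp V σf πf (ψ₁ (u - s)) a' b') s a b
           - advectOp D (fun a' b' => scatterOp V σs πs (ψ₂ (u - s)) a' b' +
              fissionOp V σf πf (ψ₂ (u - s)) a' b') s a b)‖ := by
            rw [← hsub, Real.norm_eq_abs]
        _ ≤ |∫ s in (0:ℝ)..u, M * C ^ n * C / (n.factorial : ℝ) * (u - s) ^ n| := hnorm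
        _ = M * C ^ n * C / (n.factorial : ℝ) * (u ^ (n + 1) / (n + 1)) := by
            rw [hIg, abs_of_nonneg hknn]
        _ = M * C ^ (n + 1) * u ^ (n + 1) / ((n + 1).factorial : ℝ) := by
            rw [Nat.factorial_succ]
            push_cast
            field_simp
            ring
  have hlim : Filter.Tendsto (fun n : ℕ => M * C ^ n * t ^ n / n.factorial)
      Filter.atTop (nhds 0) := by
    have h := (FloorSemiring.tendsto_pow_div_factorial_atTop (K := ℝ) (C * t)).const_mul M
    rw [mul_zero] at h
    refine h.congr fun n => ?_
    rw [mul_pow]; ring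
  have hle : |ψ₁ t r υ - ψ₂ t r υ| ≤ 0 :=
    ge_of_tendsto' hlim fun n => key n t ⟨ht, le_rfl⟩ r hr υ hυ
  have : |ψ₁ t r υ - ψ₂ t r υ| = 0 := le_antisymm hle (abs_nonneg _)
  exact sub_eq_zero.mp (abs_eq_zero.mp this)
end

section
/- Let D ⊆ ℝ³ be a nonempty open bounded convex set and let V = {υ ∈ ℝ³ : υ_min ≤ ‖υ‖ ≤ υ_max} with 0 < υ_min < υ_max. For r ∈ D and υ ∈ V define κ^D_{r,υ} := inf{t > 0 : r + tυ ∉ D}. Then inf_{r ∈ D} ∫_V ‖υ‖·κ^D_{r,υ} dυ > 0, where the integral is with respect to Lebesgue measure on V. -/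
open MeasureTheory

/-- The exit time of the ray from `r` with velocity `υ` out of `D`. -/
noncomputable def exitTime (D : Set (EuclideanSpace ℝ (Fin 3)))
    (r υ : EuclideanSpace ℝ (Fin 3)) : ℝ :=
  sInf {t : ℝ | 0 < t ∧ r + t • υ ∉ D}

section Aux

local notation "E" => EuclideanSpace ℝ (Fin 3)

open Metric Set Bornology

/-- Lower bound on the exit time from a "stay inside" condition. -/
lemma exitTime_ge_aux {D : Set E} {r υ : E} {T : ℝ}
    (hne : ∃ t : ℝ, 0 < t ∧ r + t • υ ∉ D) (hT : 0 < T)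
    (hstay : ∀ t : ℝ, 0 < t → t ≤ T → r + t • υ ∈ D) :
    T ≤ exitTime D r υ := by
  refine le_csInf hne ?_
  rintro t ⟨ht, hout⟩
  by_contra h
  exact hout (hstay t ht (le_of_not_ge h))

/-- Positivity of the gauge of the translated domain. -/
lemma gauge_pos_aux {D : Set E} (hopen : IsOpen D) (hbdd : IsBounded D)
    {r : E} (hr : r ∈ D) {υ : E} (hυ : υ ≠ 0) :
    0 < gauge ((fun x => r + x) ⁻¹' D) υ := by
  set s : Set E := (fun x => r + x) ⁻¹' D with hs
  obtain ⟨M₀, hM₀⟩ := hbdd.subset_closedBall r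
  set M : ℝ := max M₀ 1 with hM
  have hMpos : (0:ℝ) < M := lt_of_lt_of_le one_pos (le_max_right _ _)
  have hsM : ∀ x ∈ s, ‖x‖ ≤ M := by
    intro x hx
    have : r + x ∈ closedBall r M₀ := hM₀ hx
    have h1 : dist (r + x) r ≤ M₀ := mem_closedBall.1 this
    have h2 : dist (r + x) r = ‖x‖ := by
      rw [dist_eq_norm, add_sub_cancel_left]
    rw [h2] at h1
    exact h1.trans (le_max_left _ _)
  have hυn : 0 < ‖υ‖ := norm_pos_iff.2 hυ
  -- the defining set of the gauge is nonempty
  obtain ⟨δ, hδpos, hδ⟩ := Metric.isOpen_iff.1 hopen r hr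
  have hnonempty : ∃ t : ℝ, t ∈ {t ∈ Set.Ioi (0:ℝ) | t⁻¹ • υ ∈ s} := by
    refine ⟨2 * ‖υ‖ / δ, ?_, ?_⟩
    · exact Set.mem_Ioi.2 (by positivity)
    · show r + (2 * ‖υ‖ / δ)⁻¹ • υ ∈ D
      apply hδ
      rw [mem_ball_iff_norm]
      rw [add_sub_cancel_left, norm_smul, Real.norm_eq_abs, abs_of_pos (by positivity)]
      rw [show (2 * ‖υ‖ / δ)⁻¹ = δ / (2 * ‖υ‖) by field_simp]
      rw [div_mul_eq_mul_div, div_lt_iff₀ (by positivity)]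
      nlinarith
  have hlb : ‖υ‖ / M ≤ gauge s υ := by
    rw [gauge_def']
    refine le_csInf hnonempty ?_
    rintro t ⟨ht, hts⟩
    have htpos : (0:ℝ) < t := ht
    have := hsM _ hts
    rw [norm_smul, Real.norm_eq_abs, abs_of_pos (inv_pos.2 htpos)] at this
    rw [div_le_iff₀ hMpos]
    have h1 : t⁻¹ * ‖υ‖ ≤ M := this
    calc ‖υ‖ = t * (t⁻¹ * ‖υ‖) := by field_simp
    _ ≤ t * M := by nlinarith
  exact lt_of_lt_of_le (by positivity) hlb

/-- The exit time equals the inverse gauge of the translated domain. -/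
lemma exitTime_eq_inv_gauge {D : Set E} (hopen : IsOpen D) (hconv : Convex ℝ D)
    (hbdd : IsBounded D) {r : E} (hr : r ∈ D) {υ : E} (hυ : υ ≠ 0) :
    exitTime D r υ = (gauge ((fun x => r + x) ⁻¹' D) υ)⁻¹ := by
  set s : Set E := (fun x => r + x) ⁻¹' D with hs
  have h0s : (0:E) ∈ s := by
    show r + 0 ∈ D
    simpa using hr
  have hsopen : IsOpen s := hopen.preimage (continuous_const.add continuous_id)
  have hsconv : Convex ℝ s := by
    intro x hx y hy a b ha hb hab
    show r + (a • x + b • y) ∈ D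
    have h : r + (a • x + b • y) = a • (r + x) + b • (r + y) := by
      calc r + (a • x + b • y) = (a + b) • r + (a • x + b • y) := by rw [hab, one_smul]
      _ = a • (r + x) + b • (r + y) := by module
    rw [h]
    exact hconv hx hy ha hb hab
  have hmem : ∀ x : E, x ∈ s ↔ gauge s x < 1 := by
    intro x
    conv_lhs => rw [← gauge_lt_one_eq_self_of_isOpen hsconv h0s hsopen]
    rfl
  set g : ℝ := gauge s υ with hg
  have hgpos : 0 < g := gauge_pos_aux hopen hbdd hr hυ
  have hset : {t : ℝ | 0 < t ∧ r + t • υ ∉ D} = Set.Ici g⁻¹ := by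
    ext t
    simp only [Set.mem_setOf_eq, Set.mem_Ici]
    constructor
    · rintro ⟨ht, hout⟩
      have h1 : t • υ ∉ s := hout
      rw [hmem, not_lt] at h1
      rw [gauge_smul_of_nonneg ht.le, smul_eq_mul] at h1
      rw [inv_eq_one_div, div_le_iff₀ hgpos]
      linarith [mul_comm t g]
    · intro ht
      have htpos : 0 < t := lt_of_lt_of_le (inv_pos.2 hgpos) ht
      refine ⟨htpos, ?_⟩
      show t • υ ∉ s
      rw [hmem, not_lt, gauge_smul_of_nonneg htpos.le, smul_eq_mul]
      rw [inv_eq_one_div, div_le_iff₀ hgpos] at ht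
      linarith [mul_comm t g]
  rw [exitTime, hset, csInf_Ici]

set_option maxHeartbeats 1000000 in
/-- The key geometric fact: from any point of `D` there is a unit direction `u` so that
moving distance at most `ρ/4` in any direction making inner product at least `β` with `u`
remains in `D`. -/
lemma stay_in_aux {D : Set E} (hconv : Convex ℝ D) {c : E} {ρ R β : ℝ}
    (hρ : 0 < ρ) (hball : Metric.ball c ρ ⊆ D) (hR : D ⊆ Metric.closedBall c R)
    (hβhalf : 1/2 ≤ β) (hβ1 : β ≤ 1) (hβsq : R^2 * (1 - β^2) ≤ ρ^2/16) :
    ∀ r ∈ D, ∃ u : E, ‖u‖ = 1 ∧ ∀ υ : E, υ ≠ 0 → β * ‖υ‖ ≤ (inner ℝ u υ : ℝ) →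
      ∀ t : ℝ, 0 ≤ t → t * ‖υ‖ ≤ ρ/4 → r + t • υ ∈ D := by
  intro r hr
  have hrc : ‖c - r‖ ≤ R := by
    have := hR hr
    rw [Metric.mem_closedBall, dist_comm, dist_eq_norm] at this
    exact this
  by_cases hd : ‖c - r‖ ≤ ρ/2
  · -- r is close to the center: all directions work
    refine ⟨EuclideanSpace.single (0 : Fin 3) (1:ℝ), by
      rw [EuclideanSpace.norm_single]; norm_num, ?_⟩
    intro υ hυ hβυ t ht htn
    apply hball
    rw [mem_ball_iff_norm]
    have h1 : ‖r + t • υ - c‖ ≤ ‖t • υ‖ + ‖c - r‖ := by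
      have : r + t • υ - c = t • υ - (c - r) := by abel
      rw [this]
      exact norm_sub_le _ _
    have h2 : ‖t • υ‖ = t * ‖υ‖ := by
      rw [norm_smul, Real.norm_eq_abs, abs_of_nonneg ht]
    linarith
  · -- r is far from the center
    push_neg at hd
    set d : ℝ := ‖c - r‖ with hdd
    have hdpos : 0 < d := lt_trans (by linarith) hd
    refine ⟨d⁻¹ • (c - r), by
      rw [norm_smul, Real.norm_eq_abs, abs_of_pos (inv_pos.2 hdpos)]
      field_simp; exact hdd.symm, ?_⟩
    intro υ hυ hβυ t ht htn
    set u : E := d⁻¹ • (c - r) with hu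
    have hcr : c - r = d • u := by
      rw [hu, smul_smul, mul_inv_cancel₀ hdpos.ne', one_smul]
    set n : ℝ := ‖υ‖ with hn
    have hnpos : 0 < n := norm_pos_iff.2 hυ
    set p : ℝ := (inner ℝ u υ : ℝ) with hp
    have hppos : 0 < p := lt_of_lt_of_le (by nlinarith) hβυ
    set t' : ℝ := d * p / n^2 with ht'
    have ht'pos : 0 < t' := by positivity
    clear_value d u n p t'
    have hn2 : (0:ℝ) < n^2 := by positivity
    -- the point q = r + t' • υ is in the ball
    have hq : r + t' • υ ∈ D := by
      apply hball
      rw [mem_ball_iff_norm]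
      have hqc : r + t' • υ - c = t' • υ - (c - r) := by abel
      have hinner : (inner ℝ (t' • υ) (c - r) : ℝ) = t' * (d * p) := by
        rw [hcr, real_inner_smul_left, real_inner_smul_right, real_inner_comm, ← hp]
      have hnormsq : ‖r + t' • υ - c‖^2 = d^2 - d^2 * p^2 / n^2 := by
        rw [hqc, norm_sub_sq_real, hinner]
        rw [norm_smul, Real.norm_eq_abs, abs_of_pos ht'pos]
        rw [← hdd, ← hn, ht']
        field_simp
        try ring
      have hpn : β^2 * n^2 ≤ p^2 := by
        have h1 : (β * n)^2 ≤ p^2 :=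
          pow_le_pow_left₀ (by positivity) hβυ 2
        calc β^2 * n^2 = (β * n)^2 := by ring
        _ ≤ p^2 := h1
      have hbound : ‖r + t' • υ - c‖^2 < ρ^2 := by
        rw [hnormsq]
        have h1 : d^2 * (β^2 * n^2) ≤ d^2 * p^2 := by nlinarith
        have h2 : d^2 * β^2 ≤ d^2 * p^2 / n^2 := by
          rw [le_div_iff₀ hn2]
          calc d^2 * β^2 * n^2 = d^2 * (β^2 * n^2) := by ring
          _ ≤ d^2 * p^2 := h1
        have hd2 : d^2 ≤ R^2 := by nlinarith
        have hβ2 : β^2 ≤ 1 := by nlinarith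
        have h3 : d^2 * (1 - β^2) ≤ R^2 * (1 - β^2) :=
          mul_le_mul_of_nonneg_right hd2 (by linarith)
        nlinarith
      exact lt_of_pow_lt_pow_left₀ 2 hρ.le hbound
    -- t ≤ t'
    have htt' : t ≤ t' := by
      have h2 : t' * n = d * (p / n) := by
        rw [ht']; field_simp
      have h1 : ρ/4 ≤ t' * n := by
        rw [h2]
        have hpn2 : β ≤ p / n := by
          rw [le_div_iff₀ hnpos]
          linarith [mul_comm β n]
        nlinarith
      have : t * n ≤ t' * n := le_trans htn h1
      exact le_of_mul_le_mul_right this hnpos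
    -- r + t • υ is a convex combination of r and q
    have hcomb : r + t • υ = (1 - t/t') • r + (t/t') • (r + t' • υ) := by
      have hdiv : t/t' * t' = t := div_mul_cancel₀ t ht'pos.ne'
      calc r + t • υ = r + ((t/t') * t') • υ := by rw [hdiv]
      _ = (1 - t/t') • r + (t/t') • (r + t' • υ) := by module
    rw [hcomb]
    exact hconv hr hq (by
        rw [sub_nonneg, div_le_one ht'pos]; exact htt')
      (div_nonneg ht ht'pos.le) (by ring)

/-- Integrability of the Urts integrand via the gauge representation. -/
lemma integrableOn_aux {D : Set E} (hopen : IsOpen D) (hconv : Convex ℝ D)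
    (hbdd : IsBounded D) {r : E} (hr : r ∈ D) {V : Set E} (hVcomp : IsCompact V)
    (hV0 : ∀ υ ∈ V, υ ≠ (0:E)) :
    IntegrableOn (fun υ : E => ‖υ‖ * exitTime D r υ) V volume := by
  set s : Set E := (fun x => r + x) ⁻¹' D with hs
  have h0s : (0:E) ∈ s := by
    show r + 0 ∈ D
    simpa using hr
  have hsopen : IsOpen s := hopen.preimage (continuous_const.add continuous_id)
  have hsconv : Convex ℝ s := by
    intro x hx y hy a b ha hb hab
    show r + (a • x + b • y) ∈ D
    have h : r + (a • x + b • y) = a • (r + x) + b • (r + y) := by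
      calc r + (a • x + b • y) = (a + b) • r + (a • x + b • y) := by rw [hab, one_smul]
      _ = a • (r + x) + b • (r + y) := by module
    rw [h]
    exact hconv hx hy ha hb hab
  have hnhds : s ∈ nhds (0:E) := hsopen.mem_nhds h0s
  have hcont : ContinuousOn (fun υ : E => ‖υ‖ * (gauge s υ)⁻¹) V :=
    continuous_norm.continuousOn.mul
      (((continuous_gauge hsconv hnhds).continuousOn).inv₀
        fun υ hυ => (gauge_pos_aux hopen hbdd hr (hV0 υ hυ)).ne')
  have h1 : IntegrableOn (fun υ : E => ‖υ‖ * (gauge s υ)⁻¹) V volume :=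
    hcont.integrableOn_compact hVcomp
  refine h1.congr_fun (fun υ hυ => ?_) hVcomp.measurableSet
  rw [exitTime_eq_inv_gauge hopen hconv hbdd hr (hV0 υ hυ)]

end Aux

set_option maxHeartbeats 2000000 in
/-- For the basic Urts function `h(r,υ) = ‖υ‖ κ^D_{r,υ}`, the infimum over `r ∈ D`
of `∫_V h(r,υ) dυ` is strictly positive. -/
theorem urts_integral_positive (D : Set (EuclideanSpace ℝ (Fin 3)))
    (hne : D.Nonempty) (hopen : IsOpen D) (hbdd : Bornology.IsBounded D)
    (hconv : Convex ℝ D)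
    (υmin υmax : ℝ) (h0 : 0 < υmin) (hmm : υmin < υmax)
    (V : Set (EuclideanSpace ℝ (Fin 3)))
    (hV : V = {υ : EuclideanSpace ℝ (Fin 3) | υmin ≤ ‖υ‖ ∧ ‖υ‖ ≤ υmax}) :
    0 < sInf {x : ℝ | ∃ r ∈ D, x = ∫ υ in V, ‖υ‖ * exitTime D r υ} := by
  classical
  obtain ⟨c, hc⟩ := hne
  obtain ⟨ρ, hρpos, hball⟩ := Metric.isOpen_iff.1 hopen c hc
  obtain ⟨R₀, hR₀⟩ := hbdd.subset_closedBall c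
  set R : ℝ := max R₀ ρ with hRdef
  have hR : D ⊆ Metric.closedBall c R :=
    hR₀.trans (Metric.closedBall_subset_closedBall (le_max_left _ _))
  have hρR : ρ ≤ R := le_max_right _ _
  have hRpos : 0 < R := lt_of_lt_of_le hρpos hρR
  -- the angular parameter β
  have harg0 : (0:ℝ) ≤ 1 - ρ^2/(16*R^2) := by
    rw [sub_nonneg, div_le_one (by positivity)]
    nlinarith
  set β : ℝ := max (1/2) (Real.sqrt (1 - ρ^2/(16*R^2))) with hβdef
  have hβhalf : 1/2 ≤ β := le_max_left _ _
  have hβpos : 0 < β := lt_of_lt_of_le (by norm_num) hβhalf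
  have hβlt1 : β < 1 := by
    apply max_lt (by norm_num)
    rw [Real.sqrt_lt' one_pos]
    have : 0 < ρ^2/(16*R^2) := by positivity
    nlinarith
  have hβ1 : β ≤ 1 := hβlt1.le
  have hβsq : R^2 * (1 - β^2) ≤ ρ^2/16 := by
    have h1 : Real.sqrt (1 - ρ^2/(16*R^2)) ≤ β := le_max_right _ _
    have h2 : 1 - ρ^2/(16*R^2) ≤ β^2 := by
      have hss := Real.sq_sqrt harg0
      nlinarith [Real.sqrt_nonneg (1 - ρ^2/(16*R^2))]
    have h3 : 1 - β^2 ≤ ρ^2/(16*R^2) := by linarith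
    calc R^2 * (1 - β^2) ≤ R^2 * (ρ^2/(16*R^2)) := by nlinarith
    _ = ρ^2/16 := by field_simp
  -- the family of test sets
  set W : EuclideanSpace ℝ (Fin 3) → Set (EuclideanSpace ℝ (Fin 3)) :=
    fun u => {υ : EuclideanSpace ℝ (Fin 3) |
      (υmin ≤ ‖υ‖ ∧ ‖υ‖ ≤ υmax) ∧ β * ‖υ‖ ≤ (inner ℝ u υ : ℝ)} with hWdef
  have hWclosed : ∀ u : EuclideanSpace ℝ (Fin 3), IsClosed (W u) := by
    intro u
    have heq : W u = ({υ : EuclideanSpace ℝ (Fin 3) | υmin ≤ ‖υ‖} ∩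
        {υ : EuclideanSpace ℝ (Fin 3) | ‖υ‖ ≤ υmax}) ∩
        {υ : EuclideanSpace ℝ (Fin 3) | β * ‖υ‖ ≤ (inner ℝ u υ : ℝ)} := by
      ext υ
      simp only [hWdef, Set.mem_setOf_eq, Set.mem_inter_iff, and_assoc]
    rw [heq]
    exact ((isClosed_le continuous_const continuous_norm).inter
      (isClosed_le continuous_norm continuous_const)).inter
      (isClosed_le (continuous_const.mul continuous_norm) (continuous_const.inner continuous_id))
  have hWV : ∀ u : EuclideanSpace ℝ (Fin 3), W u ⊆ V := by
    intro u υ hυ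
    rw [hV]
    exact hυ.1
  set e₀ : EuclideanSpace ℝ (Fin 3) := EuclideanSpace.single (0 : Fin 3) (1:ℝ) with he₀def
  have he₀ : ‖e₀‖ = 1 := by
    rw [he₀def, EuclideanSpace.norm_single]
    norm_num
  -- all the test sets have the same volume by rotation invariance
  have hWvol : ∀ u : EuclideanSpace ℝ (Fin 3), ‖u‖ = 1 → volume (W u) = volume (W e₀) := by
    intro u hu
    set T := Submodule.reflection (Submodule.span ℝ {u - e₀})ᗮ with hT
    have hTu : T u = e₀ := Submodule.reflection_sub (by rw [hu, he₀])
    have hpre : W u = T ⁻¹' (W e₀) := by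
      ext x
      simp only [Set.mem_preimage, hWdef, Set.mem_setOf_eq]
      rw [T.norm_map]
      rw [show (inner ℝ e₀ (T x) : ℝ) = inner ℝ u x from by
        rw [← hTu, LinearIsometryEquiv.inner_map_map]]
    rw [hpre, T.measurePreserving.measure_preimage
      ((hWclosed e₀).measurableSet.nullMeasurableSet)]
  -- the volume of the test set is positive
  have hm₀pos : 0 < volume (W e₀) := by
    set m : ℝ := (υmin + υmax)/2 with hm
    have hmpos : 0 < m := by
      rw [hm]; linarith
    set ε : ℝ := min ((υmax - υmin)/2) (m * (1-β)/2) with hε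
    have hεpos : 0 < ε := lt_min (by linarith) (by nlinarith)
    have hε1 : ε ≤ (υmax - υmin)/2 := min_le_left _ _
    have hε2 : ε ≤ m * (1-β)/2 := min_le_right _ _
    have hsub : Metric.ball (m • e₀) ε ⊆ W e₀ := by
      intro υ hυ
      rw [mem_ball_iff_norm] at hυ
      have hnorm_me : ‖m • e₀‖ = m := by
        rw [norm_smul, Real.norm_eq_abs, abs_of_pos hmpos, he₀, mul_one]
      have hup : ‖υ‖ ≤ m + ε := by
        have h1 : ‖υ‖ - ‖m • e₀‖ ≤ ‖υ - m • e₀‖ := norm_sub_norm_le _ _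
        rw [hnorm_me] at h1
        linarith
      have hlo : m - ε ≤ ‖υ‖ := by
        have h1 : ‖m • e₀‖ - ‖υ‖ ≤ ‖m • e₀ - υ‖ := norm_sub_norm_le _ _
        rw [hnorm_me, norm_sub_rev] at h1
        linarith
      have hinner : m - ε ≤ (inner ℝ e₀ υ : ℝ) := by
        have hdec : υ = m • e₀ + (υ - m • e₀) := by abel
        have h1 : (inner ℝ e₀ υ : ℝ) =
            (inner ℝ e₀ (m • e₀) : ℝ) + (inner ℝ e₀ (υ - m • e₀) : ℝ) := by
          conv_lhs => rw [hdec]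
          rw [inner_add_right]
        have h2 : (inner ℝ e₀ (m • e₀) : ℝ) = m := by
          rw [real_inner_smul_right, real_inner_self_eq_norm_sq, he₀]
          norm_num
        have h3 : |(inner ℝ e₀ (υ - m • e₀) : ℝ)| ≤ ‖e₀‖ * ‖υ - m • e₀‖ :=
          abs_real_inner_le_norm _ _
        rw [he₀, one_mul] at h3
        have h4 : -(ε) ≤ (inner ℝ e₀ (υ - m • e₀) : ℝ) := by
          have := neg_abs_le (inner ℝ e₀ (υ - m • e₀) : ℝ)
          linarith
        linarith [h1, h2]
      refine ⟨⟨by linarith, by linarith⟩, ?_⟩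
      have hβm : β * ‖υ‖ ≤ β * (m + ε) :=
        mul_le_mul_of_nonneg_left hup hβpos.le
      have hfinal : β * (m + ε) ≤ m - ε := by nlinarith
      linarith
    exact lt_of_lt_of_le (Metric.measure_ball_pos volume _ hεpos) (measure_mono hsub)
  have hWtop : ∀ u : EuclideanSpace ℝ (Fin 3), volume (W u) ≠ ⊤ := by
    intro u
    refine ne_of_lt (lt_of_le_of_lt (measure_mono ?_)
      (measure_closedBall_lt_top (x := (0 : EuclideanSpace ℝ (Fin 3))) (r := υmax)))
    exact fun υ hυ => mem_closedBall_zero_iff.2 hυ.1.2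
  -- properties of V
  have hVclosed : IsClosed V := by
    rw [hV, Set.setOf_and]
    exact (isClosed_le continuous_const continuous_norm).inter
      (isClosed_le continuous_norm continuous_const)
  have hVbdd : Bornology.IsBounded V := by
    refine Metric.isBounded_closedBall (x := (0 : EuclideanSpace ℝ (Fin 3)))
      (r := υmax) |>.subset ?_
    intro υ hυ
    rw [hV] at hυ
    exact mem_closedBall_zero_iff.2 hυ.2
  have hVcomp : IsCompact V := Metric.isCompact_of_isClosed_isBounded hVclosed hVbdd
  have hV0 : ∀ υ ∈ V, υ ≠ (0 : EuclideanSpace ℝ (Fin 3)) := by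
    intro υ hυ
    rw [hV] at hυ
    have : 0 < ‖υ‖ := lt_of_lt_of_le h0 hυ.1
    exact norm_pos_iff.1 this
  -- the uniform lower bound
  set c₀ : ℝ := ρ/4 * (volume (W e₀)).toReal with hc₀
  have hc₀pos : 0 < c₀ := by
    apply mul_pos (by linarith)
    exact ENNReal.toReal_pos hm₀pos.ne' (hWtop e₀)
  have hbound : ∀ r ∈ D, c₀ ≤ ∫ υ in V, ‖υ‖ * exitTime D r υ := by
    intro r hr
    have hint : IntegrableOn (fun υ : EuclideanSpace ℝ (Fin 3) =>
        ‖υ‖ * exitTime D r υ) V volume :=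
      integrableOn_aux hopen hconv hbdd hr hVcomp hV0
    obtain ⟨u, hu1, hstay⟩ := stay_in_aux hconv hρpos hball hR hβhalf hβ1 hβsq r hr
    have hrcR : ‖c - r‖ ≤ R := by
      have := hR hr
      rw [Metric.mem_closedBall, dist_comm, dist_eq_norm] at this
      exact this
    have hWle : ∀ υ ∈ W u, ρ/4 ≤ ‖υ‖ * exitTime D r υ := by
      intro υ hυ
      obtain ⟨⟨hυ1, hυ2⟩, hυ3⟩ := hυ
      have hυn : 0 < ‖υ‖ := lt_of_lt_of_le h0 hυ1
      have hυ0 : υ ≠ 0 := norm_pos_iff.1 hυn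
      have hexit : (ρ/4)/‖υ‖ ≤ exitTime D r υ := by
        refine exitTime_ge_aux ?_ (by positivity) ?_
        · -- the ray eventually leaves D
          refine ⟨(R + 1 + ‖c - r‖)/‖υ‖, by positivity, ?_⟩
          intro hmem
          have hdist := hR hmem
          rw [Metric.mem_closedBall, dist_eq_norm] at hdist
          have heq : r + ((R + 1 + ‖c - r‖)/‖υ‖) • υ - c =
              ((R + 1 + ‖c - r‖)/‖υ‖) • υ - (c - r) := by abel
          have hsn : ‖((R + 1 + ‖c - r‖)/‖υ‖) • υ‖ = R + 1 + ‖c - r‖ := by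
            rw [norm_smul, Real.norm_eq_abs, abs_of_pos (by positivity)]
            field_simp
          have h1 : ‖((R + 1 + ‖c - r‖)/‖υ‖) • υ‖ - ‖c - r‖ ≤
              ‖((R + 1 + ‖c - r‖)/‖υ‖) • υ - (c - r)‖ := norm_sub_norm_le _ _
          rw [hsn] at h1
          rw [heq] at hdist
          linarith
        · intro t htpos htle
          refine hstay υ hυ0 hυ3 t htpos.le ?_
          rw [le_div_iff₀ hυn] at htle
          exact htle
      have h5 : ‖υ‖ * (ρ/4/‖υ‖) ≤ ‖υ‖ * exitTime D r υ :=
        mul_le_mul_of_nonneg_left hexit (norm_nonneg υ)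
      rw [mul_comm, div_mul_cancel₀ _ hυn.ne'] at h5
      exact h5
    have hWumeas := (hWclosed u).measurableSet
    have step1 : ρ/4 * (volume (W u)).toReal ≤ ∫ υ in W u, ‖υ‖ * exitTime D r υ :=
      by have := setIntegral_ge_of_const_le_real hWumeas (hWtop u) hWle (hint.mono_set (hWV u))
         rw [measureReal_def] at this; exact this
    have hnn : 0 ≤ᵐ[volume.restrict V]
        (fun υ : EuclideanSpace ℝ (Fin 3) => ‖υ‖ * exitTime D r υ) :=
      Filter.Eventually.of_forall fun υ =>
        mul_nonneg (norm_nonneg _) (Real.sInf_nonneg fun t ht => ht.1.le)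
    have step2 : ∫ υ in W u, ‖υ‖ * exitTime D r υ ≤ ∫ υ in V, ‖υ‖ * exitTime D r υ :=
      setIntegral_mono_set hint hnn (HasSubset.Subset.eventuallyLE (hWV u))
    calc c₀ = ρ/4 * (volume (W u)).toReal := by rw [hc₀, hWvol u hu1]
    _ ≤ ∫ υ in W u, ‖υ‖ * exitTime D r υ := step1
    _ ≤ ∫ υ in V, ‖υ‖ * exitTime D r υ := step2
  have hSne : {x : ℝ | ∃ r ∈ D, x = ∫ υ in V, ‖υ‖ * exitTime D r υ}.Nonempty :=
    ⟨_, c, hc, rfl⟩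
  refine lt_of_lt_of_le hc₀pos (le_csInf hSne ?_)
  rintro x ⟨r, hr, rfl⟩
  exact hbound r hr
end
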